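/- arXiv:2407.05911 — 4 statements merged into one kernel-verified Lean document; each statement's English description precedes it below -/
import Mathlib

section
/- Let 1 < p ≤ q < ∞ and α ∈ [0, d). Suppose v, w are weights on ℝ^d such that the pair (v, w) satisfies the A_{p,q}^α condition. Then ‖M_α f‖_{L^{q,∞}(ℝ^d, w dx)} ≤ C [v,w]_{A_{p,q}^α} ‖f‖_{L^p(ℝ^d, v dx)} for all f ∈ L^p(ℝ^d, v dx), where C depends only on α, d and q. -/
open MeasureTheory ENNReal NNReal Set

noncomputable section

/-- A half-open axis-parallel cube in `ℝ^d`, given by its corner and (positive) sidelength. -/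
structure Cube (d : ℕ) where
  corner : Fin d → ℝ
  side : ℝ
  side_pos : 0 < side

namespace Cube

variable {d : ℕ}

/-- The set of points of the cube: `[x_1, x_1+l) × ⋯ × [x_d, x_d+l)`. -/
def toSet (Q : Cube d) : Set (Fin d → ℝ) :=
  {y | ∀ i, Q.corner i ≤ y i ∧ y i < Q.corner i + Q.side}

/-- The translate `Q + l(Q) m` of a cube. -/
def translate (Q : Cube d) (m : Fin d → ℤ) : Cube d :=
  ⟨fun i => Q.corner i + Q.side * (m i : ℝ), Q.side, Q.side_pos⟩

/-- The corner child `x(Q) + (1/2)(Q - x(Q))` of a cube. -/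
def cornerChild (Q : Cube d) : Cube d :=
  ⟨Q.corner, Q.side / 2, by have := Q.side_pos; linarith⟩

/-- The threefold expansion `x(Q) + 3(Q - x(Q))` of a cube from its corner. -/
def expand3 (Q : Cube d) : Cube d :=
  ⟨Q.corner, 3 * Q.side, by have := Q.side_pos; linarith⟩

/-- The dilate `D_c Q`: cube with the same center as `Q` and sidelength `c·l(Q)`. -/
def dilate (Q : Cube d) (c : ℝ) (hc : 0 < c) : Cube d :=
  ⟨fun i => Q.corner i + Q.side / 2 - c * Q.side / 2, c * Q.side, by
    have := Q.side_pos; positivity⟩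

end Cube

/-- A dyadic lattice in `ℝ^d`: a family of generations of cubes, each generation formed by
all translates of one of its cubes, and each generation containing a cube whose corner child
belongs to the next generation. -/
structure DyadicLattice (d : ℕ) where
  gen : ℤ → Set (Cube d)
  gen_translates : ∀ k, ∃ Q ∈ gen k, gen k = {R | ∃ m : Fin d → ℤ, R = Q.translate m}
  cornerChild_mem : ∀ k, ∃ Q ∈ gen k, Q.cornerChild ∈ gen (k + 1)

/-- The collection of all cubes of a dyadic lattice. -/
def DyadicLattice.cubes {d : ℕ} (D : DyadicLattice d) : Set (Cube d) := ⋃ k, D.gen k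

/-- The quadrant of a dyadic lattice containing `x`: the union of all cubes of the lattice
containing `x`. -/
def DyadicLattice.quadrant {d : ℕ} (D : DyadicLattice d) (x : Fin d → ℝ) :
    Set (Fin d → ℝ) :=
  ⋃ Q ∈ {Q : Cube d | Q ∈ D.cubes ∧ x ∈ Q.toSet}, Q.toSet

/-- A weight: a locally integrable, a.e. positive (and finite) function. -/
def IsWeight {d : ℕ} (w : (Fin d → ℝ) → ℝ) : Prop :=
  LocallyIntegrable w volume ∧ ∀ᵐ x ∂(volume : Measure (Fin d → ℝ)), 0 < w x

/-- The measure `w dx` associated to a weight. -/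
def wMeasure {d : ℕ} (w : (Fin d → ℝ) → ℝ) : Measure (Fin d → ℝ) :=
  volume.withDensity fun x => ENNReal.ofReal (w x)

/-- `w(E) = ∫_E w dx`. -/
def wInt {d : ℕ} (w : (Fin d → ℝ) → ℝ) (E : Set (Fin d → ℝ)) : ℝ≥0∞ :=
  ∫⁻ x in E, ENNReal.ofReal (w x)

/-- The `L^q` norm (with `q = ∞` allowed) of an `ℝ≥0∞`-valued function. -/
def eLpNormENN {X : Type*} [MeasurableSpace X] (g : X → ℝ≥0∞) (q : ℝ≥0∞)
    (μ : Measure X) : ℝ≥0∞ :=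
  if q = ∞ then essSup g μ
  else (∫⁻ x, g x ^ q.toReal ∂μ) ^ (1 / q.toReal)

/-- The weak `L^q` quasinorm (with `q = ∞` allowed, interpreted as the `L^∞` norm) of an
`ℝ≥0∞`-valued function: `sup_{t>0} t · μ{g > t}^{1/q}`. -/
def wnormENN {X : Type*} [MeasurableSpace X] (g : X → ℝ≥0∞) (q : ℝ≥0∞)
    (μ : Measure X) : ℝ≥0∞ :=
  if q = ∞ then essSup g μ
  else ⨆ t : ℝ≥0, (t : ℝ≥0∞) * μ {x | (t : ℝ≥0∞) < g x} ^ (1 / q.toReal)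

/-- The weighted dyadic fractional maximal operator
`M^D_{α,w} f(x) = sup_{Q ∈ D, x ∈ Q} w(Q)^{α/d-1} ∫_Q |f| w`. -/
def MwDyadic {d : ℕ} (D : DyadicLattice d) (α : ℝ) (w f : (Fin d → ℝ) → ℝ)
    (x : Fin d → ℝ) : ℝ≥0∞ :=
  ⨆ (Q : Cube d) (_ : Q ∈ D.cubes) (_ : x ∈ Q.toSet),
    wInt w Q.toSet ^ (α / (d : ℝ) - 1) *
      ∫⁻ y in Q.toSet, (‖f y‖₊ : ℝ≥0∞) * ENNReal.ofReal (w y)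

/-- The dyadic fractional maximal operator `M^D_α f(x) = sup_{Q ∈ D, x ∈ Q} |Q|^{α/d} ⨍_Q |f|`. -/
def MfracDyadic {d : ℕ} (D : DyadicLattice d) (α : ℝ) (f : (Fin d → ℝ) → ℝ)
    (x : Fin d → ℝ) : ℝ≥0∞ :=
  ⨆ (Q : Cube d) (_ : Q ∈ D.cubes) (_ : x ∈ Q.toSet),
    volume Q.toSet ^ (α / (d : ℝ) - 1) * ∫⁻ y in Q.toSet, (‖f y‖₊ : ℝ≥0∞)

/-- The fractional maximal operator `M_α f(x) = sup_{Q ∋ x} |Q|^{α/d} ⨍_Q |f|`,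
supremum over all cubes containing `x`. -/
def Mfrac {d : ℕ} (α : ℝ) (f : (Fin d → ℝ) → ℝ) (x : Fin d → ℝ) : ℝ≥0∞ :=
  ⨆ (Q : Cube d) (_ : x ∈ Q.toSet),
    volume Q.toSet ^ (α / (d : ℝ) - 1) * ∫⁻ y in Q.toSet, (‖f y‖₊ : ℝ≥0∞)

/-- The weighted fractional maximal operator
`M_{α,w} f(x) = sup_{Q ∋ x} w(Q)^{α/d-1} ∫_Q |f| w`, supremum over all cubes containing `x`. -/
def Mwfrac {d : ℕ} (α : ℝ) (w f : (Fin d → ℝ) → ℝ) (x : Fin d → ℝ) : ℝ≥0∞ :=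
  ⨆ (Q : Cube d) (_ : x ∈ Q.toSet),
    wInt w Q.toSet ^ (α / (d : ℝ) - 1) *
      ∫⁻ y in Q.toSet, (‖f y‖₊ : ℝ≥0∞) * ENNReal.ofReal (w y)

/-- An `η`-sparse collection of cubes: each cube `Q` has a measurable subset `G(Q)` with
`|G(Q)| ≥ η|Q|`, the sets `G(Q)` being pairwise disjoint. -/
def IsSparseCubes {d : ℕ} (η : ℝ) (S : Set (Cube d)) : Prop :=
  ∃ G : Cube d → Set (Fin d → ℝ),
    (∀ Q ∈ S, G Q ⊆ Q.toSet ∧ MeasurableSet (G Q) ∧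
      ENNReal.ofReal η * volume Q.toSet ≤ volume (G Q)) ∧
    S.PairwiseDisjoint G

/-- The sparse operator `A_S^α f(x) = Σ_{Q ∈ S} χ_Q(x) |Q|^{α/d} ⨍_Q |f|`. -/
def sparseOp {d : ℕ} (α : ℝ) (S : Set (Cube d)) (f : (Fin d → ℝ) → ℝ)
    (x : Fin d → ℝ) : ℝ≥0∞ :=
  ∑' Q : S, (Q : Cube d).toSet.indicator
    (fun _ => volume (Q : Cube d).toSet ^ (α / (d : ℝ) - 1) *
      ∫⁻ y in (Q : Cube d).toSet, (‖f y‖₊ : ℝ≥0∞)) x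

/-- The `A_{p,q}^α` constant of a pair of weights:
`[v,w] = sup_Q |Q|^{α/d-1} (∫_Q v^{-p'/p})^{1/p'} (∫_Q w)^{1/q}` where `p' = p/(p-1)`. -/
def apqConst {d : ℕ} (p q α : ℝ) (v w : (Fin d → ℝ) → ℝ) : ℝ≥0∞ :=
  ⨆ Q : Cube d,
    volume Q.toSet ^ (α / (d : ℝ) - 1) *
      (∫⁻ x in Q.toSet, ENNReal.ofReal (v x ^ (-(p / (p - 1)) / p))) ^ ((p - 1) / p) *
      (∫⁻ x in Q.toSet, ENNReal.ofReal (w x)) ^ (1 / q)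

/-- The Muckenhoupt `A_∞` condition: `sup_Q exp(⨍_Q log w⁻¹) · ⨍_Q w < ∞`. -/
def IsAinfty {d : ℕ} (w : (Fin d → ℝ) → ℝ) : Prop :=
  ∃ C : ℝ, ∀ Q : Cube d,
    Real.exp (⨍ x in Q.toSet, Real.log (w x)⁻¹ ∂volume) *
      (⨍ x in Q.toSet, w x ∂volume) ≤ C

/-- The Euclidean norm of a point of `ℝ^d`. -/
def euclNorm {d : ℕ} (x : Fin d → ℝ) : ℝ := Real.sqrt (∑ i, x i ^ 2)

/-- The auxiliary maximal operator `M_{T,λ}` controlling oscillations of truncations of `T`: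
`M_{T,λ} f(x) = sup_{Q ∋ x} ess sup_{x',x'' ∈ Q} |T(fχ_{ℝ^d∖Q*})(x') − T(fχ_{ℝ^d∖Q*})(x'')|`. -/
def MT {d : ℕ} (T : ((Fin d → ℝ) → ℝ) → (Fin d → ℝ) → ℝ) (lam : ℝ) (hlam : 0 < lam)
    (f : (Fin d → ℝ) → ℝ) (x : Fin d → ℝ) : ℝ≥0∞ :=
  ⨆ (Q : Cube d) (_ : x ∈ Q.toSet),
    essSup
      (fun z : (Fin d → ℝ) × (Fin d → ℝ) =>
        (‖T (((Q.dilate lam hlam).toSet)ᶜ.indicator f) z.1 -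
            T (((Q.dilate lam hlam).toSet)ᶜ.indicator f) z.2‖₊ : ℝ≥0∞))
      ((volume.restrict Q.toSet).prod (volume.restrict Q.toSet))

end

noncomputable section
namespace TwoWeightAux
open MeasureTheory ENNReal NNReal Set Metric

variable {d : ℕ}

lemma cube_toSet_eq (Q : Cube d) :
    Q.toSet = Set.pi Set.univ (fun i => Set.Ico (Q.corner i) (Q.corner i + Q.side)) := by
  ext y; simp [Cube.toSet, Set.mem_pi]

lemma cube_measurable (Q : Cube d) : MeasurableSet Q.toSet := by
  rw [cube_toSet_eq]; exact MeasurableSet.univ_pi fun i => measurableSet_Ico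

lemma cube_volume (Q : Cube d) : volume Q.toSet = ENNReal.ofReal Q.side ^ d := by
  rw [cube_toSet_eq, volume_pi_pi]
  simp [Real.volume_Ico]

/-- the cube `[x-s, x+s)^d` -/
def bigCube (x : Fin d → ℝ) (s : ℝ) (hs : 0 < s) : Cube d :=
  ⟨fun i => x i - s, 2 * s, by linarith⟩

lemma bigCube_subset_closedBall (x : Fin d → ℝ) {s : ℝ} (hs : 0 < s) :
    (bigCube x s hs).toSet ⊆ closedBall x s := by
  intro y hy
  rw [mem_closedBall, dist_pi_le_iff hs.le]
  intro i
  have h := hy i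
  simp only [bigCube] at h
  rw [Real.dist_eq, abs_le]
  constructor <;> [linarith [h.2]; linarith [h.1]]

lemma subset_bigCube {Q : Cube d} {x : Fin d → ℝ} (hx : x ∈ Q.toSet) :
    Q.toSet ⊆ (bigCube x Q.side Q.side_pos).toSet := by
  intro y hy i
  have h1 := hx i; have h2 := hy i
  simp only [bigCube]
  constructor <;> [linarith [h1.2, h2.1]; linarith [h1.1, h2.2]]

lemma volume_closedBall_diff (x : Fin d → ℝ) {s : ℝ} (hs : 0 < s) :
    volume (closedBall x s \ (bigCube x s hs).toSet) = 0 := by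
  have hsub : closedBall x s ⊆ Set.pi Set.univ (fun i => Set.Icc (x i - s) (x i + s)) := by
    intro y hy
    rw [mem_closedBall, dist_pi_le_iff hs.le] at hy
    intro i _
    have := hy i
    rw [Real.dist_eq, abs_le] at this
    exact ⟨by linarith [this.1], by linarith [this.2]⟩
  have hIcc : volume (Set.pi Set.univ (fun i : Fin d => Set.Icc (x i - s) (x i + s)))
      = ENNReal.ofReal (2 * s) ^ d := by
    rw [volume_pi_pi]
    have : ∀ i : Fin d, volume (Set.Icc (x i - s) (x i + s)) = ENNReal.ofReal (2 * s) := by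
      intro i; rw [Real.volume_Icc]; ring_nf
    simp [this]
  have hcube : volume (bigCube x s hs).toSet = ENNReal.ofReal (2 * s) ^ d := by
    rw [cube_volume]; rfl
  have hsub2 : (bigCube x s hs).toSet ⊆
      Set.pi Set.univ (fun i => Set.Icc (x i - s) (x i + s)) := by
    intro y hy i _
    have := hy i
    simp only [bigCube] at this
    exact ⟨this.1, by linarith [this.2]⟩
  have h0 : volume (Set.pi Set.univ (fun i : Fin d => Set.Icc (x i - s) (x i + s))
      \ (bigCube x s hs).toSet) = 0 := by
    rw [measure_diff hsub2 (cube_measurable _).nullMeasurableSet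
      (by rw [hcube]; exact pow_ne_top ofReal_ne_top), hIcc, hcube, tsub_self]
  exact le_antisymm (le_trans (measure_mono (diff_subset_diff_left hsub)) h0.le) (zero_le)

lemma vol_ac {v : (Fin d → ℝ) → ℝ} (hv : IsWeight v) :
    (volume : Measure (Fin d → ℝ)) ≪ wMeasure v := by
  refine Measure.AbsolutelyContinuous.mk fun s hs h0 => ?_
  rw [wMeasure, withDensity_apply _ hs] at h0
  have hvm : AEMeasurable (fun x => ENNReal.ofReal (v x)) (volume.restrict s) :=
    (ENNReal.measurable_ofReal.comp_aemeasurable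
      hv.1.aestronglyMeasurable.aemeasurable).restrict
  rw [lintegral_eq_zero_iff' hvm] at h0
  have h1 : ∀ᵐ x ∂(volume : Measure (Fin d → ℝ)), x ∈ s → ENNReal.ofReal (v x) = 0 :=
    (ae_restrict_iff' hs).mp h0
  have h2 : ∀ᵐ x ∂(volume : Measure (Fin d → ℝ)), x ∉ s := by
    filter_upwards [h1, hv.2] with x hx hvx
    intro hxs
    have := hx hxs
    rw [ENNReal.ofReal_eq_zero] at this
    linarith
  exact measure_eq_zero_iff_ae_notMem.mpr h2

lemma wMeasure_le_wInt_cube {w : (Fin d → ℝ) → ℝ} (hv : IsWeight w)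
    {x : Fin d → ℝ} {s : ℝ} (hs : 0 < s) :
    wMeasure w (closedBall x s) ≤ wInt w (bigCube x s hs).toSet := by
  have h1 : wMeasure w (closedBall x s) ≤
      wMeasure w (bigCube x s hs).toSet + wMeasure w (closedBall x s \ (bigCube x s hs).toSet) :=
    le_trans (measure_mono (by intro y hy; by_cases h : y ∈ (bigCube x s hs).toSet
                                <;> simp [h, hy])) (measure_union_le _ _)
  have h2 : wMeasure w (closedBall x s \ (bigCube x s hs).toSet) = 0 :=
    (withDensity_absolutelyContinuous _ _) (volume_closedBall_diff x hs)
  rw [h2, add_zero] at h1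
  rw [wMeasure, withDensity_apply _ (cube_measurable _)] at h1
  exact h1

end TwoWeightAux
end
noncomputable section
namespace TwoWeightAux
open MeasureTheory ENNReal NNReal Set Metric

variable {d : ℕ}

lemma key_ball_bound (hd : 0 < d) {p q α : ℝ} (hp : 1 < p) (hq : 1 < q)
    (hα0 : 0 ≤ α) (hαd : α < d)
    {v w f : (Fin d → ℝ) → ℝ} (hv : IsWeight v) (hw : IsWeight w)
    (hfm : AEMeasurable f volume)
    (Q : Cube d) {x : Fin d → ℝ} (hx : x ∈ Q.toSet) {t : ℝ≥0} (ht : t ≠ 0)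
    (hlt : (t : ℝ≥0∞) < volume Q.toSet ^ (α / (d:ℝ) - 1) * ∫⁻ y in Q.toSet, (‖f y‖₊ : ℝ≥0∞)) :
    wMeasure w (closedBall x Q.side) ≤
      ((2:ℝ≥0∞) ^ (d:ℝ) * apqConst p q α v w / (t : ℝ≥0∞)) ^ q *
        (∫⁻ y in closedBall x Q.side, (‖f y‖₊ : ℝ≥0∞) ^ p * ENNReal.ofReal (v y)) ^ (q / p) := by
  set s := Q.side with hsdef
  have hs : 0 < s := Q.side_pos
  set Q' : Cube d := bigCube x s hs with hQ'def
  set β : ℝ := α / (d:ℝ) - 1 with hβdef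
  have hd' : (0:ℝ) < d := Nat.cast_pos.mpr hd
  have hq0 : (0:ℝ) < q := by linarith
  have hp0 : (0:ℝ) < p := by linarith
  set W : ℝ≥0∞ := wInt w Q'.toSet with hWdef
  set S : ℝ≥0∞ := ∫⁻ y in Q'.toSet, ENNReal.ofReal (v y ^ (-(p / (p - 1)) / p)) with hSdef
  set Ip : ℝ≥0∞ := ∫⁻ y in Q'.toSet, (‖f y‖₊ : ℝ≥0∞) ^ p * ENNReal.ofReal (v y) with hIpdef
  set A : ℝ≥0∞ := apqConst p q α v w with hAdef
  set a : ℝ≥0∞ := ENNReal.ofReal s with hadef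
  -- Step A : volume comparison
  have ha0 : a ≠ 0 := by simp [hadef, ENNReal.ofReal_eq_zero, not_le, hs]
  have hat : a ≠ ⊤ := ofReal_ne_top
  have hm : (d:ℝ) * β = α - d := by rw [hβdef]; field_simp
  have hvolQβ : volume Q.toSet ^ β = a ^ (α - d) := by
    rw [cube_volume, ← ENNReal.rpow_natCast, ← ENNReal.rpow_mul, hm]
  have hvolQ'β : volume Q'.toSet ^ β = (2:ℝ≥0∞) ^ (α - d) * a ^ (α - d) := by
    have h1 : volume Q'.toSet = ((2:ℝ≥0∞) * a) ^ d := by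
      rw [cube_volume]
      congr 1
      rw [show Q'.side = 2 * s from rfl, hadef, ENNReal.ofReal_mul (by norm_num)]
      norm_num
    rw [h1, ← ENNReal.rpow_natCast, ← ENNReal.rpow_mul, hm,
      ENNReal.mul_rpow_of_ne_top (by norm_num) hat]
  have hstepA : volume Q.toSet ^ β ≤ (2:ℝ≥0∞) ^ (d:ℝ) * volume Q'.toSet ^ β := by
    rw [hvolQβ, hvolQ'β, ← mul_assoc]
    have h2 : (2:ℝ≥0∞) ^ (d:ℝ) * (2:ℝ≥0∞) ^ (α - d) = (2:ℝ≥0∞) ^ ((d:ℝ) + (α - d)) :=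
      (ENNReal.rpow_add _ _ (by norm_num) (by norm_num)).symm
    have h3 : (1:ℝ≥0∞) ≤ (2:ℝ≥0∞) ^ ((d:ℝ) + (α - d)) := by
      calc (1:ℝ≥0∞) = (2:ℝ≥0∞) ^ (0:ℝ) := by rw [ENNReal.rpow_zero]
        _ ≤ _ := ENNReal.rpow_le_rpow_of_exponent_le (by norm_num) (by linarith)
    rw [h2]
    calc a ^ (α - d) = 1 * a ^ (α - d) := (one_mul _).symm
      _ ≤ _ := mul_le_mul_left h3 _
  have hQsub : Q.toSet ⊆ Q'.toSet := subset_bigCube hx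
  have hstepA' : (t : ℝ≥0∞) ≤ (2:ℝ≥0∞) ^ (d:ℝ) *
      (volume Q'.toSet ^ β * ∫⁻ y in Q'.toSet, (‖f y‖₊ : ℝ≥0∞)) := by
    refine hlt.le.trans ?_
    rw [← mul_assoc]
    exact mul_le_mul' hstepA (lintegral_mono_set hQsub)
  -- Step B : Hölder
  have hvae : ∀ᵐ y ∂(volume : Measure (Fin d → ℝ)), 0 < v y := hv.2
  have hvm : AEMeasurable (fun y => ENNReal.ofReal (v y)) (volume : Measure (Fin d → ℝ)) :=
    ENNReal.measurable_ofReal.comp_aemeasurable hv.1.aestronglyMeasurable.aemeasurable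
  set g1 : (Fin d → ℝ) → ℝ≥0∞ := fun y => (‖f y‖₊ : ℝ≥0∞) * ENNReal.ofReal (v y) ^ (1/p)
    with hg1def
  set g2 : (Fin d → ℝ) → ℝ≥0∞ := fun y => ENNReal.ofReal (v y) ^ (-(1/p)) with hg2def
  have hconj : p.HolderConjugate (p / (p - 1)) :=
    (Real.holderConjugate_iff_eq_conjExponent hp).mpr rfl
  have hg1m : AEMeasurable g1 (volume.restrict Q'.toSet) :=
    ((hfm.nnnorm.coe_nnreal_ennreal).mul (hvm.pow_const _)).restrict
  have hg2m : AEMeasurable g2 (volume.restrict Q'.toSet) := (hvm.pow_const _).restrict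
  have hholder := ENNReal.lintegral_mul_le_Lp_mul_Lq (volume.restrict Q'.toSet) hconj hg1m hg2m
  have hmuleq : ∀ᵐ y ∂(volume.restrict Q'.toSet), (g1 * g2) y = (‖f y‖₊ : ℝ≥0∞) := by
    filter_upwards [ae_restrict_of_ae hvae] with y hy
    have h0 : ENNReal.ofReal (v y) ≠ 0 := by simp [ENNReal.ofReal_eq_zero, not_le, hy]
    simp only [Pi.mul_apply, hg1def, hg2def, mul_assoc]
    rw [← ENNReal.rpow_add _ _ h0 ofReal_ne_top]
    norm_num
  have hg1p : ∀ᵐ y ∂(volume.restrict Q'.toSet),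
      g1 y ^ p = (‖f y‖₊ : ℝ≥0∞) ^ p * ENNReal.ofReal (v y) := by
    filter_upwards with y
    simp only [hg1def]
    rw [ENNReal.mul_rpow_of_nonneg _ _ hp0.le, ← ENNReal.rpow_mul,
      one_div, inv_mul_cancel₀ hp0.ne', ENNReal.rpow_one]
  have hg2p : ∀ᵐ y ∂(volume.restrict Q'.toSet),
      g2 y ^ (p / (p-1)) = ENNReal.ofReal (v y ^ (-(p / (p - 1)) / p)) := by
    filter_upwards [ae_restrict_of_ae hvae] with y hy
    simp only [hg2def]
    have hexp : (-(1/p)) * (p / (p-1)) = -(p / (p - 1)) / p := by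
      have h1 : p ≠ 0 := by linarith
      have h2 : p - 1 ≠ 0 := by linarith
      field_simp
    rw [← ENNReal.rpow_mul, hexp, ← ENNReal.ofReal_rpow_of_pos hy]
  have hstepB : (∫⁻ y in Q'.toSet, (‖f y‖₊ : ℝ≥0∞))
      ≤ Ip ^ (1/p) * S ^ ((p-1)/p) := by
    have e1 : (∫⁻ y in Q'.toSet, (‖f y‖₊ : ℝ≥0∞)) = ∫⁻ y in Q'.toSet, (g1 * g2) y :=
      (lintegral_congr_ae hmuleq).symm
    have e2 : (∫⁻ y in Q'.toSet, g1 y ^ p) = Ip := lintegral_congr_ae hg1p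
    have e3 : (∫⁻ y in Q'.toSet, g2 y ^ (p / (p-1))) = S := lintegral_congr_ae hg2p
    have e4 : 1 / (p / (p-1)) = (p-1)/p := by field_simp
    rw [e1]
    calc (∫⁻ y in Q'.toSet, (g1 * g2) y)
        ≤ (∫⁻ y in Q'.toSet, g1 y ^ p) ^ (1/p) *
            (∫⁻ y in Q'.toSet, g2 y ^ (p / (p-1))) ^ (1 / (p / (p-1))) := hholder
      _ = Ip ^ (1/p) * S ^ ((p-1)/p) := by rw [e2, e3, e4]
  -- Step C : apqConst bound
  have hstepC : volume Q'.toSet ^ β * S ^ ((p-1)/p) * W ^ (1/q) ≤ A := by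
    rw [hAdef, apqConst]
    exact le_iSup (fun R : Cube d => volume R.toSet ^ (α / (d:ℝ) - 1) *
      (∫⁻ y in R.toSet, ENNReal.ofReal (v y ^ (-(p / (p - 1)) / p))) ^ ((p - 1) / p) *
      (∫⁻ y in R.toSet, ENNReal.ofReal (w y)) ^ (1 / q)) Q'
  -- Step D : t * W^{1/q} ≤ 2^d A Ip^{1/p}
  have hstepD : (t : ℝ≥0∞) * W ^ (1/q) ≤ (2:ℝ≥0∞) ^ (d:ℝ) * A * Ip ^ (1/p) := by
    calc (t : ℝ≥0∞) * W ^ (1/q)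
        ≤ ((2:ℝ≥0∞) ^ (d:ℝ) * (volume Q'.toSet ^ β * ∫⁻ y in Q'.toSet, (‖f y‖₊ : ℝ≥0∞))) *
            W ^ (1/q) := mul_le_mul_left hstepA' _
      _ ≤ ((2:ℝ≥0∞) ^ (d:ℝ) * (volume Q'.toSet ^ β * (Ip ^ (1/p) * S ^ ((p-1)/p)))) *
            W ^ (1/q) := by gcongr
      _ = (2:ℝ≥0∞) ^ (d:ℝ) * (volume Q'.toSet ^ β * S ^ ((p-1)/p) * W ^ (1/q)) * Ip ^ (1/p) := by
            ring
      _ ≤ (2:ℝ≥0∞) ^ (d:ℝ) * A * Ip ^ (1/p) :=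
            mul_le_mul_left (mul_le_mul_right hstepC _) _
  -- Step E : invert
  have hstepE : W ≤ ((2:ℝ≥0∞) ^ (d:ℝ) * A / (t : ℝ≥0∞)) ^ q * Ip ^ (q/p) := by
    have ht0 : (t : ℝ≥0∞) ≠ 0 := by simpa using ht
    have h1 : W ^ (1/q) ≤ (2:ℝ≥0∞) ^ (d:ℝ) * A * Ip ^ (1/p) / (t : ℝ≥0∞) := by
      rw [ENNReal.le_div_iff_mul_le (Or.inl ht0) (Or.inl coe_ne_top), mul_comm]
      exact hstepD
    have h2 : W = (W ^ (1/q)) ^ q := by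
      rw [← ENNReal.rpow_mul, one_div, inv_mul_cancel₀ hq0.ne', ENNReal.rpow_one]
    rw [h2]
    calc (W ^ (1/q)) ^ q ≤ ((2:ℝ≥0∞) ^ (d:ℝ) * A * Ip ^ (1/p) / (t : ℝ≥0∞)) ^ q := by gcongr
      _ = ((2:ℝ≥0∞) ^ (d:ℝ) * A / (t : ℝ≥0∞)) ^ q * Ip ^ (q/p) := by
          rw [show (2:ℝ≥0∞) ^ (d:ℝ) * A * Ip ^ (1/p) / (t : ℝ≥0∞)
              = ((2:ℝ≥0∞) ^ (d:ℝ) * A / (t : ℝ≥0∞)) * Ip ^ (1/p) by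
            simp only [div_eq_mul_inv]; ring]
          rw [ENNReal.mul_rpow_of_nonneg _ _ hq0.le, ← ENNReal.rpow_mul]
          congr 2
          field_simp
  -- Step F : conclude
  have hWle : wMeasure w (closedBall x s) ≤ W := wMeasure_le_wInt_cube hw hs
  have hIple : Ip ≤ ∫⁻ y in closedBall x s, (‖f y‖₊ : ℝ≥0∞) ^ p * ENNReal.ofReal (v y) :=
    lintegral_mono_set (bigCube_subset_closedBall x hs)
  calc wMeasure w (closedBall x s) ≤ W := hWle
    _ ≤ ((2:ℝ≥0∞) ^ (d:ℝ) * A / (t : ℝ≥0∞)) ^ q * Ip ^ (q/p) := hstepE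
    _ ≤ _ := by gcongr

end TwoWeightAux
end
noncomputable section
namespace TwoWeightAux
open MeasureTheory ENNReal NNReal Set Metric

lemma tsum_rpow_le {ι : Type*} [Countable ι] (a : ι → ℝ≥0∞) {s : ℝ} (hs : 1 ≤ s) :
    ∑' i, a i ^ s ≤ (∑' i, a i) ^ s := by
  set T := ∑' i, a i with hT
  rcases eq_or_ne T ⊤ with hTt | hTt
  · rw [hTt, ENNReal.top_rpow_of_pos (by linarith)]; exact le_top
  have key : ∀ i, a i ^ s ≤ a i * T ^ (s - 1) := by
    intro i
    rcases eq_or_ne (a i) 0 with h0 | h0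
    · rw [h0, ENNReal.zero_rpow_of_pos (by linarith)]; exact zero_le
    have hit : a i ≠ ⊤ := ne_top_of_le_ne_top hTt (ENNReal.le_tsum i)
    calc a i ^ s = a i ^ ((1:ℝ) + (s - 1)) := by norm_num
      _ = a i ^ (1:ℝ) * a i ^ (s - 1) := ENNReal.rpow_add _ _ h0 hit
      _ = a i * a i ^ (s - 1) := by rw [ENNReal.rpow_one]
      _ ≤ a i * T ^ (s-1) :=
          mul_le_mul_right (ENNReal.rpow_le_rpow (ENNReal.le_tsum i) (by linarith)) _
  calc ∑' i, a i ^ s ≤ ∑' i, a i * T ^ (s-1) := ENNReal.tsum_le_tsum key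
    _ = T * T ^ (s-1) := ENNReal.tsum_mul_right
    _ ≤ T ^ s := by
        rcases eq_or_ne T 0 with h | h
        · rw [h, zero_mul]; exact zero_le
        · calc T * T ^ (s-1) = T ^ (1:ℝ) * T ^ (s-1) := by rw [ENNReal.rpow_one]
            _ = T ^ ((1:ℝ) + (s-1)) := (ENNReal.rpow_add _ _ h hTt).symm
            _ ≤ T ^ s := by norm_num

end TwoWeightAux
end
noncomputable section
namespace TwoWeightAux
open MeasureTheory ENNReal NNReal Set Metric

variable {d : ℕ}

lemma covering_bound (hd : 0 < d) {N : ℕ} {τ : ℝ} (hτ : 1 < τ)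
    (hsat : IsEmpty (Besicovitch.SatelliteConfig (Fin d → ℝ) N τ))
    {p q α : ℝ} (hp : 1 < p) (hq : 1 < q) (hpq : p ≤ q) (hα0 : 0 ≤ α) (hαd : α < d)
    {v w f : (Fin d → ℝ) → ℝ} (hv : IsWeight v) (hw : IsWeight w)
    (hfm : AEMeasurable f volume)
    {t : ℝ≥0} (ht : t ≠ 0) (n : ℕ) :
    wMeasure w {x | ∃ Q : Cube d, x ∈ Q.toSet ∧ Q.side ≤ (n:ℝ) ∧
        (t : ℝ≥0∞) < volume Q.toSet ^ (α / (d:ℝ) - 1) * ∫⁻ y in Q.toSet, (‖f y‖₊ : ℝ≥0∞)} ≤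
      (N : ℝ≥0∞) * (((2:ℝ≥0∞) ^ (d:ℝ) * apqConst p q α v w / (t:ℝ≥0∞)) ^ q *
        (∫⁻ y, (‖f y‖₊ : ℝ≥0∞) ^ p * ENNReal.ofReal (v y)) ^ (q / p)) := by
  classical
  set E := {x | ∃ Q : Cube d, x ∈ Q.toSet ∧ Q.side ≤ (n:ℝ) ∧
      (t : ℝ≥0∞) < volume Q.toSet ^ (α / (d:ℝ) - 1) * ∫⁻ y in Q.toSet, (‖f y‖₊ : ℝ≥0∞)}
    with hE
  set μfv : Measure (Fin d → ℝ) :=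
    volume.withDensity (fun y => (‖f y‖₊ : ℝ≥0∞) ^ p * ENNReal.ofReal (v y)) with hμfv
  set K : ℝ≥0∞ := ((2:ℝ≥0∞) ^ (d:ℝ) * apqConst p q α v w / (t:ℝ≥0∞)) ^ q with hK
  set IT : ℝ≥0∞ := ∫⁻ y, (‖f y‖₊ : ℝ≥0∞) ^ p * ENNReal.ofReal (v y) with hIT
  have hp0 : (0:ℝ) < p := by linarith
  have hqp1 : 1 ≤ q / p := (one_le_div hp0).2 hpq
  have hch : ∀ b : ↥E, ∃ Q : Cube d, (b : Fin d → ℝ) ∈ Q.toSet ∧ Q.side ≤ (n:ℝ) ∧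
      (t : ℝ≥0∞) < volume Q.toSet ^ (α / (d:ℝ) - 1) * ∫⁻ y in Q.toSet, (‖f y‖₊ : ℝ≥0∞) :=
    fun b => b.2
  set pkg : Besicovitch.BallPackage (↥E) (Fin d → ℝ) :=
    { c := Subtype.val
      r := fun b => (hch b).choose.side
      rpos := fun b => (hch b).choose.side_pos
      r_bound := n
      r_le := fun b => (hch b).choose_spec.2.1 } with hpkg
  obtain ⟨U, hU_disj, hU_cov⟩ := Besicovitch.exist_disjoint_covering_families hτ hsat pkg
  have hball : ∀ b : ↥E, wMeasure w (closedBall (pkg.c b) (pkg.r b)) ≤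
      K * (μfv (closedBall (pkg.c b) (pkg.r b))) ^ (q/p) := by
    intro b
    have hspec := (hch b).choose_spec
    have h := key_ball_bound hd hp hq hα0 hαd hv hw hfm (hch b).choose hspec.1 ht hspec.2.2
    refine le_trans (le_of_eq rfl) (h.trans ?_)
    rw [hμfv, withDensity_apply _ measurableSet_closedBall]
  have hEcov : E ⊆ ⋃ i : Fin N, ⋃ b ∈ U i, closedBall (pkg.c b) (pkg.r b) := by
    intro y hy
    have hmem : y ∈ range pkg.c := ⟨⟨y, hy⟩, rfl⟩
    obtain ⟨i, hi⟩ := mem_iUnion.1 (hU_cov hmem)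
    simp only [mem_iUnion] at hi
    obtain ⟨b, hb, hyb⟩ := hi
    exact mem_iUnion.2 ⟨i, mem_iUnion.2 ⟨b, mem_iUnion.2 ⟨hb, ball_subset_closedBall hyb⟩⟩⟩
  have hfam : ∀ i : Fin N, wMeasure w (⋃ b ∈ U i, closedBall (pkg.c b) (pkg.r b)) ≤
      K * IT ^ (q/p) := by
    intro i
    have hcnt : (U i).Countable := by
      refine (hU_disj i).countable_of_nonempty_interior fun b _ => ?_
      exact (nonempty_ball.2 (pkg.rpos b)).mono
        (interior_maximal ball_subset_closedBall isOpen_ball)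
    haveI := hcnt.to_subtype
    calc wMeasure w (⋃ b ∈ U i, closedBall (pkg.c b) (pkg.r b))
        ≤ ∑' b : (U i), wMeasure w (closedBall (pkg.c b) (pkg.r b)) :=
          measure_biUnion_le _ hcnt _
      _ ≤ ∑' b : (U i), K * (μfv (closedBall (pkg.c b) (pkg.r b))) ^ (q/p) :=
          ENNReal.tsum_le_tsum fun b => hball b
      _ = K * ∑' b : (U i), (μfv (closedBall (pkg.c b) (pkg.r b))) ^ (q/p) :=
          ENNReal.tsum_mul_left
      _ ≤ K * (∑' b : (U i), μfv (closedBall (pkg.c b) (pkg.r b))) ^ (q/p) :=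
          mul_le_mul_right (tsum_rpow_le _ hqp1) _
      _ = K * (μfv (⋃ b ∈ U i, closedBall (pkg.c b) (pkg.r b))) ^ (q/p) := by
          rw [measure_biUnion hcnt (hU_disj i) fun b _ => measurableSet_closedBall]
      _ ≤ K * (μfv Set.univ) ^ (q/p) :=
          mul_le_mul_right (ENNReal.rpow_le_rpow (measure_mono (subset_univ _))
            (div_nonneg (by linarith) hp0.le)) _
      _ = K * IT ^ (q/p) := by
          rw [hμfv, hIT, withDensity_apply _ MeasurableSet.univ, Measure.restrict_univ]
  calc wMeasure w E
      ≤ wMeasure w (⋃ i : Fin N, ⋃ b ∈ U i, closedBall (pkg.c b) (pkg.r b)) :=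
        measure_mono hEcov
    _ ≤ ∑' i : Fin N, wMeasure w (⋃ b ∈ U i, closedBall (pkg.c b) (pkg.r b)) :=
        measure_iUnion_le _
    _ ≤ ∑' _i : Fin N, K * IT ^ (q/p) := ENNReal.tsum_le_tsum hfam
    _ = (N : ℝ≥0∞) * (K * IT ^ (q/p)) := by
        rw [tsum_fintype, Finset.sum_const, Finset.card_univ, Fintype.card_fin, nsmul_eq_mul]

end TwoWeightAux
end
open MeasureTheory ENNReal NNReal Set Metric in
/-- two-weight weak type estimate for the fractional maximal operator. -/
theorem two_weight_weak_type_fractional_maximal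
    {d : ℕ} (hd : 0 < d) (q α : ℝ) (hq : 1 < q)
    (hα0 : 0 ≤ α) (hαd : α < d) :
    ∃ C : ℝ≥0∞, C ≠ ∞ ∧
      ∀ p : ℝ, 1 < p → p ≤ q →
        ∀ v w : (Fin d → ℝ) → ℝ, IsWeight v → IsWeight w →
          apqConst p q α v w ≠ ∞ →
          ∀ f : (Fin d → ℝ) → ℝ, MemLp f (ENNReal.ofReal p) (wMeasure v) →
            wnormENN (Mfrac α f) (ENNReal.ofReal q) (wMeasure w)
              ≤ C * apqConst p q α v w * eLpNorm f (ENNReal.ofReal p) (wMeasure v) := by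
  classical
  obtain ⟨N, τ, hτ, hsat⟩ :=
    HasBesicovitchCovering.no_satelliteConfig (α := Fin d → ℝ)
  have hq0 : (0:ℝ) < q := by linarith
  refine ⟨((N : ℝ≥0∞) + 1) * (2:ℝ≥0∞) ^ (d:ℝ), ?_, ?_⟩
  · exact ENNReal.mul_ne_top (by simp)
      (ENNReal.rpow_ne_top_of_nonneg (Nat.cast_nonneg d) (by norm_num))
  intro p hp hpq v w hv hw hA f hf
  have hp0 : (0:ℝ) < p := by linarith
  set A := apqConst p q α v w with hAdef
  set Ef := eLpNorm f (ENNReal.ofReal p) (wMeasure v) with hEfdef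
  set Kc := (2:ℝ≥0∞) ^ (d:ℝ) with hKc
  have hac : (volume : Measure (Fin d → ℝ)) ≪ wMeasure v := TwoWeightAux.vol_ac hv
  have hfm : AEMeasurable f volume := hf.aestronglyMeasurable.aemeasurable.mono_ac hac
  have hvm : AEMeasurable (fun y => ENNReal.ofReal (v y)) (volume : Measure (Fin d → ℝ)) :=
    ENNReal.measurable_ofReal.comp_aemeasurable hv.1.aestronglyMeasurable.aemeasurable
  -- total integral identity
  have hIT : (∫⁻ y, (‖f y‖₊ : ℝ≥0∞) ^ p * ENNReal.ofReal (v y)) = Ef ^ p := by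
    have h1 := lintegral_withDensity_eq_lintegral_mul₀ (μ := (volume : Measure (Fin d → ℝ)))
      (g := fun y => (‖f y‖₊ : ℝ≥0∞) ^ p) hvm (hfm.nnnorm.coe_nnreal_ennreal.pow_const _)
    have h2 : (∫⁻ y, (‖f y‖₊ : ℝ≥0∞) ^ p * ENNReal.ofReal (v y))
        = ∫⁻ y, (‖f y‖₊ : ℝ≥0∞) ^ p ∂(wMeasure v) := by
      rw [wMeasure, h1]
      exact lintegral_congr fun y => mul_comm _ _
    have h3 : Ef = (∫⁻ y, (‖f y‖₊ : ℝ≥0∞) ^ p ∂(wMeasure v)) ^ (1/p) := by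
      rw [hEfdef, eLpNorm_eq_lintegral_rpow_enorm_toReal (ENNReal.ofReal_pos.mpr hp0).ne'
        ofReal_ne_top, ENNReal.toReal_ofReal hp0.le]
      rfl
    rw [h2, h3, ← ENNReal.rpow_mul, one_div, inv_mul_cancel₀ hp0.ne', ENNReal.rpow_one]
  simp only [wnormENN, if_neg (show ENNReal.ofReal q ≠ ⊤ from ofReal_ne_top),
    ENNReal.toReal_ofReal hq0.le]
  refine iSup_le fun t => ?_
  rcases eq_or_ne t 0 with rfl | ht
  · simp
  have htc0 : (t : ℝ≥0∞) ≠ 0 := by simpa using ht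
  set B := (N : ℝ≥0∞) * ((Kc * A / (t:ℝ≥0∞)) ^ q * (Ef ^ p) ^ (q / p)) with hB
  have hmeas_le : wMeasure w {x | (t:ℝ≥0∞) < Mfrac α f x} ≤ B := by
    set En : ℕ → Set (Fin d → ℝ) := fun n => {x | ∃ Q : Cube d, x ∈ Q.toSet ∧
        Q.side ≤ (n:ℝ) ∧ (t : ℝ≥0∞) < volume Q.toSet ^ (α / (d:ℝ) - 1) *
          ∫⁻ y in Q.toSet, (‖f y‖₊ : ℝ≥0∞)} with hEn
    have hsub : {x | (t:ℝ≥0∞) < Mfrac α f x} ⊆ ⋃ n, En n := by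
      intro x hx
      simp only [Mfrac, lt_iSup_iff, mem_setOf_eq] at hx
      obtain ⟨Q, hxQ, hQ⟩ := hx
      obtain ⟨n, hn⟩ := exists_nat_ge Q.side
      exact mem_iUnion.2 ⟨n, Q, hxQ, hn, hQ⟩
    have hmono : Monotone En := by
      intro m k hmk x hx
      obtain ⟨Q, h1, h2, h3⟩ := hx
      exact ⟨Q, h1, h2.trans (Nat.cast_le.2 hmk), h3⟩
    calc wMeasure w {x | (t:ℝ≥0∞) < Mfrac α f x} ≤ wMeasure w (⋃ n, En n) :=
          measure_mono hsub
      _ = ⨆ n, wMeasure w (En n) := hmono.directed_le.measure_iUnion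
      _ ≤ B := by
          refine iSup_le fun n => ?_
          have hcb := TwoWeightAux.covering_bound hd hτ hsat hp hq hpq hα0 hαd hv hw hfm ht n
          rw [hIT] at hcb
          exact hcb
  have hfin := mul_le_mul_right (ENNReal.rpow_le_rpow hmeas_le
    (one_div_nonneg.mpr hq0.le)) (t : ℝ≥0∞)
  refine hfin.trans ?_
  have hEfq : (Ef ^ p) ^ (q / p) = Ef ^ q := by
    rw [← ENNReal.rpow_mul]
    congr 1
    field_simp
  have hBq : B ^ (1/q) = (N : ℝ≥0∞) ^ (1/q) * ((Kc * A / (t:ℝ≥0∞)) * Ef) := by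
    rw [hB, hEfq, ENNReal.mul_rpow_of_nonneg _ _ (one_div_nonneg.mpr hq0.le),
      ENNReal.mul_rpow_of_nonneg _ _ (one_div_nonneg.mpr hq0.le),
      ← ENNReal.rpow_mul, ← ENNReal.rpow_mul, mul_one_div_cancel hq0.ne',
      ENNReal.rpow_one, ENNReal.rpow_one]
  have heq : (t : ℝ≥0∞) * B ^ (1/q) = (N : ℝ≥0∞) ^ (1/q) * (Kc * A * Ef) := by
    rw [hBq, show (t:ℝ≥0∞) * ((N : ℝ≥0∞) ^ (1/q) * ((Kc * A / (t:ℝ≥0∞)) * Ef))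
      = (N : ℝ≥0∞) ^ (1/q) * ((Kc * A / (t:ℝ≥0∞) * (t:ℝ≥0∞)) * Ef) by ring,
      ENNReal.div_mul_cancel htc0 coe_ne_top]
  rw [heq]
  have hN : (N : ℝ≥0∞) ^ (1/q) ≤ (N : ℝ≥0∞) + 1 := by
    rcases Nat.eq_zero_or_pos N with h | h
    · rw [h, Nat.cast_zero, ENNReal.zero_rpow_of_pos (one_div_pos.mpr hq0)]
      simp
    · have h1 : (1:ℝ≥0∞) ≤ (N : ℝ≥0∞) := by exact_mod_cast h
      calc (N : ℝ≥0∞) ^ (1/q) ≤ (N : ℝ≥0∞) ^ (1:ℝ) :=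
            ENNReal.rpow_le_rpow_of_exponent_le h1 (by rw [div_le_one hq0]; linarith)
        _ = (N : ℝ≥0∞) := ENNReal.rpow_one _
        _ ≤ (N : ℝ≥0∞) + 1 := le_self_add
  calc (N : ℝ≥0∞) ^ (1/q) * (Kc * A * Ef) ≤ ((N : ℝ≥0∞) + 1) * (Kc * A * Ef) :=
        mul_le_mul_left hN _
    _ = ((N : ℝ≥0∞) + 1) * Kc * A * Ef := by ring
end

section
/- Let D be a dyadic lattice in ℝ^d with exactly one quadrant, let f ∈ L^1_loc(ℝ^d) have compact support, and let α ∈ [0, d). Then there is a 1/2-sparse family of cubes S = S(f) ⊆ D such that M^D_α f(x) ≤ 2^{1−α/d} · Σ_{Q∈S} χ_Q(x) |Q|^{α/d} ⨍_Q |f| for almost every x ∈ ℝ^d. -/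
open MeasureTheory ENNReal NNReal Set

/-! ### Auxiliary development for sparse domination -/

noncomputable section SparseAux

namespace SD

open Cube

variable {d : ℕ}


lemma mem_toSet {Q : Cube d} {y : Fin d → ℝ} :
    y ∈ Q.toSet ↔ ∀ i, Q.corner i ≤ y i ∧ y i < Q.corner i + Q.side := Iff.rfl

lemma toSet_eq_pi (Q : Cube d) :
    Q.toSet = Set.pi Set.univ (fun i => Set.Ico (Q.corner i) (Q.corner i + Q.side)) := by
  ext y; simp [Cube.toSet, Set.mem_pi]

lemma measurableSet_toSet (Q : Cube d) : MeasurableSet Q.toSet := by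
  rw [toSet_eq_pi]
  exact MeasurableSet.pi (Set.countable_univ) fun i _ => measurableSet_Ico

lemma corner_mem_toSet (Q : Cube d) : Q.corner ∈ Q.toSet :=
  fun i => ⟨le_refl _, by linarith [Q.side_pos]⟩

lemma toSet_nonempty (Q : Cube d) : Q.toSet.Nonempty := ⟨Q.corner, corner_mem_toSet Q⟩

lemma volume_toSet (Q : Cube d) : volume Q.toSet = ENNReal.ofReal (Q.side ^ d) := by
  rw [toSet_eq_pi, volume_pi_pi]
  simp only [Real.volume_Ico, add_sub_cancel_left]
  rw [Finset.prod_const, ← ENNReal.ofReal_pow Q.side_pos.le]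
  simp

lemma update_mem_toSet {Q : Cube d} {y : Fin d → ℝ} (hy : y ∈ Q.toSet) {i : Fin d} {t : ℝ}
    (ht : Q.corner i ≤ t) (ht' : t < Q.corner i + Q.side) :
    Function.update y i t ∈ Q.toSet := by
  intro j
  rcases eq_or_ne j i with rfl | hj
  · simpa using ⟨ht, ht'⟩
  · rw [Function.update_of_ne hj]; exact hy j

lemma subset_iff {Q R : Cube d} :
    R.toSet ⊆ Q.toSet ↔
      ∀ i, Q.corner i ≤ R.corner i ∧ R.corner i + R.side ≤ Q.corner i + Q.side := by
  constructor
  · intro h i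
    have h1 := (h (corner_mem_toSet R) i).1
    refine ⟨h1, ?_⟩
    by_contra hlt
    push_neg at hlt
    set t := max (R.corner i) (Q.corner i + Q.side) with htdef
    have htmem : R.corner i ≤ t := le_max_left _ _
    have ht2 : t < R.corner i + R.side := by
      rcases max_cases (R.corner i) (Q.corner i + Q.side) with ⟨he, _⟩ | ⟨he, _⟩ <;>
        rw [htdef, he] <;> [linarith [R.side_pos]; linarith]
    have := (h (update_mem_toSet (corner_mem_toSet R) htmem ht2) i).2
    rw [Function.update_self] at this
    have := le_max_right (R.corner i) (Q.corner i + Q.side)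
    linarith
  · intro h y hy i
    exact ⟨(h i).1.trans (hy i).1, (hy i).2.trans_le (h i).2⟩

lemma side_le_of_subset (hd : 0 < d) {Q R : Cube d} (h : R.toSet ⊆ Q.toSet) :
    R.side ≤ Q.side := by
  obtain ⟨h1, h2⟩ := subset_iff.mp h ⟨0, hd⟩
  linarith

lemma eq_of_subset_of_side_le (hd : 0 < d) {Q R : Cube d} (h : R.toSet ⊆ Q.toSet)
    (hs : Q.side ≤ R.side) : R = Q := by
  have hs' : R.side = Q.side := le_antisymm (side_le_of_subset hd h) hs
  have hc : R.corner = Q.corner := by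
    funext i
    obtain ⟨h1, h2⟩ := subset_iff.mp h i
    have : R.corner i ≤ Q.corner i := by linarith
    linarith [le_antisymm this h1]
  cases R; cases Q
  simp_all

lemma cube_eq_of_toSet_eq (hd : 0 < d) {Q R : Cube d} (h : Q.toSet = R.toSet) : Q = R :=
  eq_of_subset_of_side_le hd h.le.subset (side_le_of_subset hd h.ge.subset)

/-! #### Translates and tiling -/

lemma translate_toSet (Q : Cube d) (m : Fin d → ℤ) :
    (Q.translate m).toSet =
      {y | ∀ i, Q.corner i + Q.side * m i ≤ y i ∧ y i < Q.corner i + Q.side * m i + Q.side} :=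
  rfl

lemma translate_translate (Q : Cube d) (m m' : Fin d → ℤ) :
    (Q.translate m).translate m' = Q.translate (m + m') := by
  simp only [Cube.translate]
  congr 1
  funext i
  simp only [Pi.add_apply]
  push_cast
  ring

lemma exists_unique_translate_mem (Q : Cube d) (y : Fin d → ℝ) :
    ∃! m : Fin d → ℤ, y ∈ (Q.translate m).toSet := by
  have hs := Q.side_pos
  refine ⟨fun i => ⌊(y i - Q.corner i) / Q.side⌋, ?_, ?_⟩
  · intro i
    simp only [Cube.translate]
    constructor
    · have := Int.floor_le ((y i - Q.corner i) / Q.side)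
      have := (mul_le_mul_iff_of_pos_right hs).mpr this
      rw [div_mul_cancel₀ _ hs.ne'] at this
      nlinarith
    · have := Int.lt_floor_add_one ((y i - Q.corner i) / Q.side)
      have := (mul_lt_mul_iff_of_pos_right hs).mpr this
      rw [div_mul_cancel₀ _ hs.ne'] at this
      nlinarith
  · intro m hm
    funext i
    obtain ⟨h1, h2⟩ := hm i
    simp only [Cube.translate] at h1 h2
    symm
    rw [Int.floor_eq_iff]
    constructor
    · rw [le_div_iff₀ hs]; nlinarith
    · rw [div_lt_iff₀ hs]; push_cast; nlinarith

/-! #### Generations of a dyadic lattice -/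

variable (D : DyadicLattice d)

lemma gen_eq_translates_self {k : ℤ} {Q : Cube d} (hQ : Q ∈ D.gen k) :
    D.gen k = {R | ∃ m : Fin d → ℤ, R = Q.translate m} := by
  obtain ⟨B, _, hB⟩ := D.gen_translates k
  obtain ⟨p, rfl⟩ : ∃ p, Q = B.translate p := by rw [hB] at hQ; exact hQ
  rw [hB]
  ext R
  constructor
  · rintro ⟨m, rfl⟩
    exact ⟨m - p, by rw [translate_translate]; congr 1; ring⟩
  · rintro ⟨m, rfl⟩
    exact ⟨p + m, by rw [translate_translate]⟩

lemma exists_unique_gen_mem (k : ℤ) (y : Fin d → ℝ) :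
    ∃! Q : Cube d, Q ∈ D.gen k ∧ y ∈ Q.toSet := by
  obtain ⟨B, hB, hBtr⟩ := D.gen_translates k
  obtain ⟨m, hm, hmu⟩ := exists_unique_translate_mem B y
  refine ⟨B.translate m, ⟨by rw [hBtr]; exact ⟨m, rfl⟩, hm⟩, ?_⟩
  rintro R ⟨hR, hyR⟩
  rw [hBtr] at hR
  obtain ⟨m', rfl⟩ := hR
  rw [hmu m' hyR]

/-- The unique cube of generation `k` containing `y`. -/
def cubeAt (k : ℤ) (y : Fin d → ℝ) : Cube d :=
  (exists_unique_gen_mem D k y).exists.choose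

lemma cubeAt_mem_gen (k : ℤ) (y : Fin d → ℝ) : cubeAt D k y ∈ D.gen k :=
  (exists_unique_gen_mem D k y).exists.choose_spec.1

lemma mem_cubeAt (k : ℤ) (y : Fin d → ℝ) : y ∈ (cubeAt D k y).toSet :=
  (exists_unique_gen_mem D k y).exists.choose_spec.2

lemma cubeAt_unique {k : ℤ} {y : Fin d → ℝ} {Q : Cube d} (hQ : Q ∈ D.gen k)
    (hy : y ∈ Q.toSet) : Q = cubeAt D k y :=
  ((exists_unique_gen_mem D k y).unique ⟨hQ, hy⟩
    ⟨cubeAt_mem_gen D k y, mem_cubeAt D k y⟩)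

lemma cubeAt_mem_cubes (k : ℤ) (y : Fin d → ℝ) : cubeAt D k y ∈ D.cubes :=
  Set.mem_iUnion.mpr ⟨k, cubeAt_mem_gen D k y⟩

lemma side_eq_of_mem_gen {k : ℤ} {Q R : Cube d} (hQ : Q ∈ D.gen k) (hR : R ∈ D.gen k) :
    Q.side = R.side := by
  rw [gen_eq_translates_self D hQ] at hR
  obtain ⟨m, rfl⟩ := hR
  rfl


/-! #### Refinement structure -/

/-- The sidelength of generation `k`. -/
def sideGen (k : ℤ) : ℝ := (D.gen_translates k).choose.side

lemma side_eq_sideGen {k : ℤ} {Q : Cube d} (hQ : Q ∈ D.gen k) : Q.side = sideGen D k :=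
  side_eq_of_mem_gen D hQ (D.gen_translates k).choose_spec.1

lemma sideGen_pos (k : ℤ) : 0 < sideGen D k := (D.gen_translates k).choose.side_pos

lemma sideGen_succ (k : ℤ) : sideGen D (k + 1) = sideGen D k / 2 := by
  obtain ⟨Q, hQ, hQ'⟩ := D.cornerChild_mem k
  have h1 : Q.cornerChild.side = sideGen D (k + 1) := side_eq_sideGen D hQ'
  have h2 : Q.side = sideGen D k := side_eq_sideGen D hQ
  rw [← h1, ← h2]; rfl

lemma sideGen_strictAnti : StrictAnti (sideGen D) := by
  apply strictAnti_int_of_succ_lt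
  intro k
  rw [sideGen_succ]
  linarith [sideGen_pos D k]

/-- Key refinement step: a cube of generation `k+1` meeting a cube of generation `k`
is contained in it. -/
lemma subset_of_mem_succ {k : ℤ} {R Q : Cube d} (hR : R ∈ D.gen (k + 1)) (hQ : Q ∈ D.gen k)
    (hne : (R.toSet ∩ Q.toSet).Nonempty) : R.toSet ⊆ Q.toSet := by
  obtain ⟨B, hB, hB'⟩ := D.cornerChild_mem k
  have hs := B.side_pos
  rw [gen_eq_translates_self D hB'] at hR
  rw [gen_eq_translates_self D hB] at hQ
  obtain ⟨m, rfl⟩ := hR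
  obtain ⟨m', rfl⟩ := hQ
  obtain ⟨z, hz1, hz2⟩ := hne
  rw [subset_iff]
  intro i
  have hz1i := hz1 i
  have hz2i := hz2 i
  simp only [Cube.translate, Cube.cornerChild] at hz1i hz2i ⊢
  obtain ⟨ha1, ha2⟩ := hz1i
  obtain ⟨hb1, hb2⟩ := hz2i
  -- from the overlap, 2 * m' i ≤ m i ≤ 2 * m' i + 1 as integers
  have key1 : 2 * m' i ≤ m i := by
    have : (m' i : ℝ) * 2 < (m i : ℝ) + 1 := by nlinarith
    have := (Int.lt_iff_add_one_le).mpr (by exact_mod_cast this : (m' i) * 2 < m i + 1)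
    omega
  have key2 : m i ≤ 2 * m' i + 1 := by
    have : (m i : ℝ) < (m' i * 2 : ℤ) + 2 := by push_cast; nlinarith
    have := (Int.lt_iff_add_one_le).mpr (by exact_mod_cast this : m i < m' i * 2 + 2)
    omega
  constructor
  · have : (2 * m' i : ℝ) ≤ (m i : ℝ) := by exact_mod_cast key1
    nlinarith
  · have : (m i : ℝ) ≤ (2 * m' i + 1 : ℝ) := by exact_mod_cast key2
    nlinarith

lemma cubeAt_succ_subset (k : ℤ) (y : Fin d → ℝ) :
    (cubeAt D (k + 1) y).toSet ⊆ (cubeAt D k y).toSet :=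
  subset_of_mem_succ D (cubeAt_mem_gen D (k + 1) y) (cubeAt_mem_gen D k y)
    ⟨y, mem_cubeAt D (k + 1) y, mem_cubeAt D k y⟩

lemma cubeAt_antitone {k j : ℤ} (hkj : k ≤ j) (y : Fin d → ℝ) :
    (cubeAt D j y).toSet ⊆ (cubeAt D k y).toSet := by
  have key : ∀ n : ℕ, (cubeAt D (k + n) y).toSet ⊆ (cubeAt D k y).toSet := by
    intro n
    induction n with
    | zero => simp
    | succ n ih =>
      have h1 : (k + (n + 1 : ℕ) : ℤ) = (k + n) + 1 := by push_cast; ring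
      rw [h1]
      exact (cubeAt_succ_subset D (k + n) y).trans ih
  obtain ⟨n, rfl⟩ : ∃ n : ℕ, j = k + n := ⟨(j - k).toNat, by omega⟩
  exact key n

/-- Cubes of the lattice of comparable generations are nとested or disjoint. -/
lemma subset_of_le_of_mem {k j : ℤ} {Q R : Cube d} (hQ : Q ∈ D.gen k) (hR : R ∈ D.gen j)
    (hkj : k ≤ j) (hne : (R.toSet ∩ Q.toSet).Nonempty) : R.toSet ⊆ Q.toSet := by
  obtain ⟨z, hz1, hz2⟩ := hne
  rw [cubeAt_unique D hR hz1, cubeAt_unique D hQ hz2]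
  exact cubeAt_antitone D hkj z

lemma gen_unique (hd : 0 < d) {k j : ℤ} {Q : Cube d} (hQ : Q ∈ D.gen k) (hQ' : Q ∈ D.gen j) :
    k = j := by
  have h1 := side_eq_sideGen D hQ
  have h2 := side_eq_sideGen D hQ'
  exact (sideGen_strictAnti D).injective (h1 ▸ h2)

open Classical in
/-- The generation index of a cube of the lattice. -/
def idx (Q : Cube d) : ℤ := if h : ∃ k, Q ∈ D.gen k then h.choose else 0

lemma mem_gen_idx {Q : Cube d} (hQ : Q ∈ D.cubes) : Q ∈ D.gen (idx D Q) := by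
  rw [idx]
  obtain ⟨k, hk⟩ := Set.mem_iUnion.mp hQ
  rw [dif_pos ⟨k, hk⟩]
  exact (⟨k, hk⟩ : ∃ k, Q ∈ D.gen k).choose_spec

lemma idx_eq (hd : 0 < d) {k : ℤ} {Q : Cube d} (hQ : Q ∈ D.gen k) : idx D Q = k :=
  gen_unique D hd (mem_gen_idx D (Set.mem_iUnion.mpr ⟨k, hQ⟩)) hQ

lemma side_idx {Q : Cube d} (hQ : Q ∈ D.cubes) : Q.side = sideGen D (idx D Q) :=
  side_eq_sideGen D (mem_gen_idx D hQ)

lemma idx_le_of_subset (hd : 0 < d) {Q R : Cube d} (hQ : Q ∈ D.cubes) (hR : R ∈ D.cubes)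
    (h : R.toSet ⊆ Q.toSet) : idx D Q ≤ idx D R := by
  have := side_le_of_subset hd h
  rw [side_idx D hQ, side_idx D hR] at this
  by_contra hlt
  push_neg at hlt
  exact absurd this (not_le.mpr (sideGen_strictAnti D hlt))

lemma idx_lt_of_ssubset (hd : 0 < d) {Q R : Cube d} (hQ : Q ∈ D.cubes) (hR : R ∈ D.cubes)
    (h : R.toSet ⊆ Q.toSet) (hne : R ≠ Q) : idx D Q < idx D R := by
  rcases lt_or_eq_of_le (idx_le_of_subset D hd hQ hR h) with h' | h'
  · exact h'
  · exfalso
    apply hne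
    apply eq_of_subset_of_side_le hd h
    rw [side_idx D hQ, side_idx D hR, h']

/-- Two cubes of the lattice are nested or disjoint. -/
lemma nested_or_disjoint (hd : 0 < d) {Q R : Cube d} (hQ : Q ∈ D.cubes) (hR : R ∈ D.cubes)
    (hne : (Q.toSet ∩ R.toSet).Nonempty) : Q.toSet ⊆ R.toSet ∨ R.toSet ⊆ Q.toSet := by
  obtain hkj | hkj := le_total (idx D Q) (idx D R)
  · exact Or.inr (subset_of_le_of_mem D (mem_gen_idx D hQ) (mem_gen_idx D hR) hkj
      (hne.mono (Set.inter_comm _ _).le))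
  · exact Or.inl (subset_of_le_of_mem D (mem_gen_idx D hR) (mem_gen_idx D hQ) hkj hne)

lemma cubes_countable : D.cubes.Countable := by
  apply Set.countable_iUnion
  intro k
  obtain ⟨B, _, hB⟩ := D.gen_translates k
  rw [hB]
  have : {R : Cube d | ∃ m : Fin d → ℤ, R = B.translate m} = Set.range (B.translate) := by
    ext R; simp [Set.mem_range, eq_comm]
  rw [this]
  exact Set.countable_range _


/-! #### Values and the stopping-time (Calderon-Zygmund) children -/

/-- The value `|Q|^{α/d-1} ∫_Q |f|` of a cube. -/
def val (α : ℝ) (f : (Fin d → ℝ) → ℝ) (Q : Cube d) : ℝ≥0∞ :=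
  volume Q.toSet ^ (α / (d : ℝ) - 1) * ∫⁻ y in Q.toSet, (‖f y‖₊ : ℝ≥0∞)

/-- The constant `2^{1-α/d}`. -/
def aC (d : ℕ) (α : ℝ) : ℝ≥0∞ := ENNReal.ofReal ((2 : ℝ) ^ (1 - α / (d : ℝ)))

variable {α : ℝ} {f : (Fin d → ℝ) → ℝ}

lemma one_le_aC (hα0 : 0 ≤ α) (hαd : α ≤ d) : 1 ≤ aC d α := by
  rw [aC, ENNReal.one_le_ofReal]
  apply Real.one_le_rpow one_le_two
  rcases Nat.eq_zero_or_pos d with h | h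
  · simp [h]
  · have hd' : (0:ℝ) < d := by exact_mod_cast h
    rw [sub_nonneg, div_le_one hd']
    exact hαd

lemma aC_ne_zero : aC d α ≠ 0 := by
  rw [aC, ne_eq, ENNReal.ofReal_eq_zero, not_le]
  exact Real.rpow_pos_of_pos two_pos _

lemma aC_ne_top : aC d α ≠ ∞ := ENNReal.ofReal_ne_top

lemma vol_ne_zero (Q : Cube d) : volume Q.toSet ≠ 0 := by
  rw [volume_toSet, ne_eq, ENNReal.ofReal_eq_zero, not_le]
  exact pow_pos Q.side_pos d

lemma vol_ne_top (Q : Cube d) : volume Q.toSet ≠ ∞ := by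
  rw [volume_toSet]; exact ENNReal.ofReal_ne_top

lemma vol_rpow (Q : Cube d) (e : ℝ) :
    volume Q.toSet ^ e = ENNReal.ofReal (Q.side ^ ((d : ℝ) * e)) := by
  rw [volume_toSet, ← Real.rpow_natCast Q.side d,
    ENNReal.ofReal_rpow_of_pos (Real.rpow_pos_of_pos Q.side_pos _),
    ← Real.rpow_mul Q.side_pos.le]

lemma lint_lt_top (hf : LocallyIntegrable f volume) (Q : Cube d) :
    (∫⁻ y in Q.toSet, (‖f y‖₊ : ℝ≥0∞)) < ∞ := by
  have hsub : Q.toSet ⊆ Set.Icc Q.corner (fun i => Q.corner i + Q.side) := by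
    intro y hy
    rw [Set.mem_Icc]
    constructor <;> intro i
    · exact (hy i).1
    · exact (hy i).2.le
  have hcpt : IsCompact (Set.Icc Q.corner (fun i => Q.corner i + Q.side)) := isCompact_Icc
  have hint := hf.integrableOn_isCompact hcpt
  exact lt_of_le_of_lt (lintegral_mono_set hsub) hint.2

lemma val_lt_top (hf : LocallyIntegrable f volume) (Q : Cube d) : val α f Q < ∞ := by
  rw [val, vol_rpow]
  exact ENNReal.mul_lt_top ENNReal.ofReal_lt_top (lint_lt_top hf Q)

lemma rpow_mul_val (Q : Cube d) :
    volume Q.toSet ^ (1 - α / (d : ℝ)) * val α f Q = ∫⁻ y in Q.toSet, (‖f y‖₊ : ℝ≥0∞) := by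
  rw [val, ← mul_assoc, ← ENNReal.rpow_add _ _ (vol_ne_zero Q) (vol_ne_top Q)]
  norm_num

variable (α) (f) in
open Classical in
/-- The stopping children of a cube: maximal subcubes `R` with
`val R > 2^{1-α/d} val Q`, selected via least generation index. -/
def kids (Q : Cube d) : Set (Cube d) :=
  {R | ∃ y ∈ Q.toSet,
    ∃ h : ∃ n : ℕ, aC d α * val α f Q < val α f (cubeAt D (idx D Q + 1 + n) y),
      R = cubeAt D (idx D Q + 1 + Nat.find h) y}

lemma kids_mem_cubes {Q R : Cube d} (hR : R ∈ kids D α f Q) : R ∈ D.cubes := by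
  obtain ⟨y, hy, h, rfl⟩ := hR
  exact cubeAt_mem_cubes D _ y

lemma kids_subset {Q R : Cube d} (hQ : Q ∈ D.cubes) (hR : R ∈ kids D α f Q) :
    R.toSet ⊆ Q.toSet := by
  obtain ⟨y, hy, h, rfl⟩ := hR
  exact subset_of_le_of_mem D (mem_gen_idx D hQ) (cubeAt_mem_gen D _ y) (by omega)
    ⟨y, mem_cubeAt D _ y, hy⟩

lemma kids_val {Q R : Cube d} (hR : R ∈ kids D α f Q) :
    aC d α * val α f Q < val α f R := by
  obtain ⟨y, hy, h, rfl⟩ := hR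
  exact Nat.find_spec h

lemma kids_side {Q R : Cube d} (hQ : Q ∈ D.cubes) (hR : R ∈ kids D α f Q) :
    R.side ≤ Q.side / 2 := by
  obtain ⟨y, hy, h, rfl⟩ := hR
  have h1 : (cubeAt D (idx D Q + 1 + Nat.find h) y).side
      = sideGen D (idx D Q + 1 + Nat.find h) :=
    side_eq_sideGen D (cubeAt_mem_gen D _ y)
  have h2 : sideGen D (idx D Q + 1 + (Nat.find h : ℤ)) ≤ sideGen D (idx D Q + 1) :=
    (sideGen_strictAnti D).antitone (by omega)
  rw [h1]
  calc sideGen D (idx D Q + 1 + (Nat.find h : ℤ)) ≤ sideGen D (idx D Q + 1) := h2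
  _ = sideGen D (idx D Q) / 2 := sideGen_succ D _
  _ = Q.side / 2 := by rw [side_idx D hQ]

lemma kids_ne {Q R : Cube d} (hQ : Q ∈ D.cubes) (hR : R ∈ kids D α f Q) : R ≠ Q := by
  intro h
  subst h
  have := kids_side (D := D) hQ hR
  linarith [R.side_pos]

lemma kids_disjoint {Q R R' : Cube d} (hQ : Q ∈ D.cubes) (hR : R ∈ kids D α f Q)
    (hR' : R' ∈ kids D α f Q) (hne : (R.toSet ∩ R'.toSet).Nonempty) : R = R' := by
  obtain ⟨y, hy, h, rfl⟩ := hR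
  obtain ⟨y', hy', h', rfl⟩ := hR'
  obtain ⟨z, hz, hz'⟩ := hne
  -- WLOG via an auxiliary claim
  have key : ∀ (w w' : Fin d → ℝ)
      (hw : ∃ n : ℕ, aC d α * val α f Q < val α f (cubeAt D (idx D Q + 1 + n) w))
      (hw' : ∃ n : ℕ, aC d α * val α f Q < val α f (cubeAt D (idx D Q + 1 + n) w')),
      Nat.find hw ≤ Nat.find hw' →
      (z ∈ (cubeAt D (idx D Q + 1 + Nat.find hw) w).toSet) →
      (z ∈ (cubeAt D (idx D Q + 1 + Nat.find hw') w').toSet) →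
      cubeAt D (idx D Q + 1 + Nat.find hw) w = cubeAt D (idx D Q + 1 + Nat.find hw') w' := by
    intro w w' hw hw' hle hzw hzw'
    have hsub : (cubeAt D (idx D Q + 1 + Nat.find hw') w').toSet
        ⊆ (cubeAt D (idx D Q + 1 + Nat.find hw) w).toSet :=
      subset_of_le_of_mem D (cubeAt_mem_gen D _ w) (cubeAt_mem_gen D _ w') (by omega)
        ⟨z, hzw', hzw⟩
    have hmemw' : w' ∈ (cubeAt D (idx D Q + 1 + Nat.find hw) w).toSet :=
      hsub (mem_cubeAt D _ w')
    have heq : cubeAt D (idx D Q + 1 + Nat.find hw) w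
        = cubeAt D (idx D Q + 1 + Nat.find hw) w' :=
      cubeAt_unique D (cubeAt_mem_gen D _ w) hmemw'
    have hval : aC d α * val α f Q < val α f (cubeAt D (idx D Q + 1 + Nat.find hw) w') := by
      rw [← heq]; exact Nat.find_spec hw
    have hfind : Nat.find hw' ≤ Nat.find hw := Nat.find_le hval
    have : Nat.find hw = Nat.find hw' := le_antisymm hle hfind
    rw [heq, this]
  rcases le_total (Nat.find h) (Nat.find h') with hle | hle
  · exact key y y' h h' hle hz hz'
  · exact (key y' y h' h hle hz' hz).symm

lemma kids_cover {Q P : Cube d} (hd : 0 < d) (hQ : Q ∈ D.cubes) (hP : P ∈ D.cubes)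
    (hsub : P.toSet ⊆ Q.toSet) (hne : P ≠ Q)
    (hval : aC d α * val α f Q < val α f P) :
    ∃ R ∈ kids D α f Q, P.toSet ⊆ R.toSet := by
  classical
  have hyP : P.corner ∈ Q.toSet := hsub (corner_mem_toSet P)
  have hidx : idx D Q < idx D P := idx_lt_of_ssubset D hd hQ hP hsub hne
  have hPy : P = cubeAt D (idx D P) P.corner :=
    cubeAt_unique D (mem_gen_idx D hP) (corner_mem_toSet P)
  have hwit : ∃ n : ℕ, aC d α * val α f Q
      < val α f (cubeAt D (idx D Q + 1 + n) P.corner) := by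
    refine ⟨(idx D P - idx D Q - 1).toNat, ?_⟩
    have : idx D Q + 1 + ((idx D P - idx D Q - 1).toNat : ℤ) = idx D P := by omega
    rw [this, ← hPy]
    exact hval
  refine ⟨cubeAt D (idx D Q + 1 + Nat.find hwit) P.corner, ⟨P.corner, hyP, hwit, rfl⟩, ?_⟩
  have hfle : Nat.find hwit ≤ (idx D P - idx D Q - 1).toNat := by
    apply Nat.find_le
    have h1 : idx D Q + 1 + ((idx D P - idx D Q - 1).toNat : ℤ) = idx D P := by omega
    rw [h1, ← hPy]
    exact hval
  have hfle' : (Nat.find hwit : ℤ) ≤ ((idx D P - idx D Q - 1).toNat : ℤ) := by exact_mod_cast hfle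
  have hfin := cubeAt_antitone D
    (show idx D Q + 1 + (Nat.find hwit : ℤ) ≤ idx D P by omega) P.corner
  rw [← hPy] at hfin
  exact hfin


lemma kids_pairwiseDisjoint {Q : Cube d} (hQ : Q ∈ D.cubes) :
    (kids D α f Q).PairwiseDisjoint Cube.toSet := by
  intro R hR R' hR' hne
  rw [Function.onFun]
  by_contra hnd
  rw [Set.not_disjoint_iff_nonempty_inter] at hnd
  exact hne (kids_disjoint D hQ hR hR' hnd)

lemma kids_countable (Q : Cube d) : (kids D α f Q).Countable :=
  (cubes_countable D).mono fun R hR => kids_mem_cubes D hR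

/-- The fundamental measure estimate for the stopping children. -/
lemma kids_measure (hd : 0 < d) (hα0 : 0 ≤ α) (hαd : α < d)
    (hf : LocallyIntegrable f volume) {Q : Cube d} (hQ : Q ∈ D.cubes) :
    volume (⋃ R ∈ kids D α f Q, R.toSet) ≤ ENNReal.ofReal (1 / 2) * volume Q.toSet := by
  have hd0 : (0:ℝ) < d := by exact_mod_cast hd
  have hd1 : (1:ℝ) ≤ d := by exact_mod_cast hd
  have hs := Q.side_pos
  set K := kids D α f Q with hK
  have hKc : K.Countable := kids_countable D Q
  have hKd : K.PairwiseDisjoint Cube.toSet := kids_pairwiseDisjoint D hQ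
  have hmeas : ∀ R ∈ K, MeasurableSet R.toSet := fun R _ => measurableSet_toSet R
  rw [measure_biUnion hKc hKd hmeas]
  by_cases hI : (∫⁻ y in Q.toSet, (‖f y‖₊ : ℝ≥0∞)) = 0
  · -- no children
    have : K = ∅ := by
      rw [Set.eq_empty_iff_forall_notMem]
      intro R hR
      have h1 := kids_val D (hK ▸ hR)
      have h2 : val α f R = 0 := by
        rw [val]
        have : (∫⁻ y in R.toSet, (‖f y‖₊ : ℝ≥0∞)) = 0 :=
          le_antisymm (hI ▸ lintegral_mono_set (kids_subset D hQ (hK ▸ hR))) zero_le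
        rw [this, mul_zero]
      rw [h2] at h1
      exact absurd h1 (not_lt.mpr zero_le)
    rw [this]
    simp
  · have hIt : (∫⁻ y in Q.toSet, (‖f y‖₊ : ℝ≥0∞)) ≠ ∞ := (lint_lt_top hf Q).ne
    have hvol : volume Q.toSet ^ (1 - α / (d:ℝ)) ≠ 0 := by
      rw [vol_rpow]
      rw [ne_eq, ENNReal.ofReal_eq_zero, not_le]
      exact Real.rpow_pos_of_pos hs _
    have hv0 : val α f Q ≠ 0 := by
      intro h
      apply hI
      rw [← rpow_mul_val Q, h, mul_zero]
    have hvt : val α f Q ≠ ∞ := (val_lt_top hf Q).ne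
    have havQ0 : aC d α * val α f Q ≠ 0 := mul_ne_zero aC_ne_zero hv0
    have havQt : aC d α * val α f Q ≠ ∞ := ENNReal.mul_ne_top aC_ne_top hvt
    -- each child bound
    have hchild : ∀ R ∈ K, volume R.toSet ≤
        ENNReal.ofReal ((Q.side / 2) ^ α) *
          ((∫⁻ y in R.toSet, (‖f y‖₊ : ℝ≥0∞)) / (aC d α * val α f Q)) := by
      intro R hR
      have hside := kids_side D hQ (hK ▸ hR)
      have hval := (kids_val D (hK ▸ hR)).le
      have e1 : volume R.toSet
          = volume R.toSet ^ (α / (d:ℝ)) * volume R.toSet ^ (1 - α / (d:ℝ)) := by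
        rw [← ENNReal.rpow_add _ _ (vol_ne_zero R) (vol_ne_top R)]
        norm_num
      have e2 : volume R.toSet ^ (α / (d:ℝ)) ≤ ENNReal.ofReal ((Q.side / 2) ^ α) := by
        rw [vol_rpow]
        apply ENNReal.ofReal_le_ofReal
        have hexp : (d:ℝ) * (α / d) = α := by field_simp
        rw [hexp]
        exact Real.rpow_le_rpow R.side_pos.le hside hα0
      have e3 : volume R.toSet ^ (1 - α / (d:ℝ))
          ≤ (∫⁻ y in R.toSet, (‖f y‖₊ : ℝ≥0∞)) / (aC d α * val α f Q) := by
        rw [ENNReal.le_div_iff_mul_le (Or.inl havQ0) (Or.inl havQt)]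
        calc volume R.toSet ^ (1 - α / (d:ℝ)) * (aC d α * val α f Q)
            ≤ volume R.toSet ^ (1 - α / (d:ℝ)) * val α f R :=
              mul_le_mul_right hval _
          _ = _ := rpow_mul_val R
      calc volume R.toSet
          = volume R.toSet ^ (α / (d:ℝ)) * volume R.toSet ^ (1 - α / (d:ℝ)) := e1
        _ ≤ ENNReal.ofReal ((Q.side / 2) ^ α) *
            ((∫⁻ y in R.toSet, (‖f y‖₊ : ℝ≥0∞)) / (aC d α * val α f Q)) :=
              mul_le_mul' e2 e3
    -- sum the integrals
    have hsum : (∑' R : K, (∫⁻ y in (R : Cube d).toSet, (‖f y‖₊ : ℝ≥0∞)))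
        ≤ ∫⁻ y in Q.toSet, (‖f y‖₊ : ℝ≥0∞) := by
      rw [← lintegral_biUnion hKc (fun R _ => measurableSet_toSet R) hKd]
      exact lintegral_mono_set (Set.iUnion₂_subset fun R hR => kids_subset D hQ (hK ▸ hR))
    calc (∑' R : K, volume (R : Cube d).toSet)
        ≤ ∑' R : K, ENNReal.ofReal ((Q.side / 2) ^ α) *
            ((∫⁻ y in (R : Cube d).toSet, (‖f y‖₊ : ℝ≥0∞)) / (aC d α * val α f Q)) :=
          ENNReal.tsum_le_tsum fun R => hchild R R.2
      _ = ∑' R : K, (ENNReal.ofReal ((Q.side / 2) ^ α) * (aC d α * val α f Q)⁻¹) *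
            (∫⁻ y in (R : Cube d).toSet, (‖f y‖₊ : ℝ≥0∞)) := by
          apply tsum_congr
          intro R
          rw [ENNReal.div_eq_inv_mul, ← mul_assoc]
      _ = ENNReal.ofReal ((Q.side / 2) ^ α) * (aC d α * val α f Q)⁻¹ *
            (∑' R : K, (∫⁻ y in (R : Cube d).toSet, (‖f y‖₊ : ℝ≥0∞))) :=
          ENNReal.tsum_mul_left
      _ ≤ ENNReal.ofReal ((Q.side / 2) ^ α) * (aC d α * val α f Q)⁻¹ *
            (∫⁻ y in Q.toSet, (‖f y‖₊ : ℝ≥0∞)) := mul_le_mul_right hsum _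
      _ = ENNReal.ofReal ((Q.side / 2) ^ α) * (aC d α)⁻¹ *
            volume Q.toSet ^ (1 - α / (d:ℝ)) := by
          rw [← rpow_mul_val Q, ENNReal.mul_inv (Or.inl aC_ne_zero) (Or.inl aC_ne_top)]
          calc ENNReal.ofReal ((Q.side / 2) ^ α) * ((aC d α)⁻¹ * (val α f Q)⁻¹) *
                (volume Q.toSet ^ (1 - α / (d:ℝ)) * val α f Q)
              = ENNReal.ofReal ((Q.side / 2) ^ α) * (aC d α)⁻¹ *
                volume Q.toSet ^ (1 - α / (d:ℝ)) * (val α f Q * (val α f Q)⁻¹) := by ring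
            _ = _ := by rw [ENNReal.mul_inv_cancel hv0 hvt, mul_one]
      _ ≤ ENNReal.ofReal (1 / 2) * volume Q.toSet := by
          rw [mul_comm (ENNReal.ofReal ((Q.side / 2) ^ α)) _, mul_assoc, vol_rpow,
            ← ENNReal.ofReal_mul (by positivity)]
          rw [ENNReal.inv_mul_le_iff aC_ne_zero aC_ne_top] -- may need different name
          rw [volume_toSet, ← ENNReal.ofReal_mul (by norm_num), aC,
            ← ENNReal.ofReal_mul (by positivity)]
          apply ENNReal.ofReal_le_ofReal
          -- the real inequality
          have hexp : (d:ℝ) * (1 - α / d) = d - α := by field_simp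
          rw [hexp]
          have h1 : (Q.side / 2) ^ α * Q.side ^ ((d:ℝ) - α)
              = Q.side ^ (d:ℝ) * (2:ℝ) ^ (-α) := by
            rw [Real.div_rpow hs.le (by norm_num), div_mul_eq_mul_div,
              ← Real.rpow_add hs, show α + ((d:ℝ) - α) = (d:ℝ) by ring,
              div_eq_mul_inv, ← Real.rpow_neg (by norm_num : (0:ℝ) ≤ 2)]
          rw [h1, ← Real.rpow_natCast Q.side d]
          have h2 : (2:ℝ) ^ (1 - α / (d:ℝ)) * (1 / 2 * Q.side ^ (d:ℝ))
              = Q.side ^ (d:ℝ) * (2:ℝ) ^ (-(α / d)) := by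
            rw [show (1:ℝ) - α / d = -(α/d) + 1 by ring, Real.rpow_add (by norm_num : (0:ℝ) < 2),
              Real.rpow_one]
            ring
          rw [h2]
          apply mul_le_mul_of_nonneg_left _ (Real.rpow_nonneg hs.le _)
          apply (Real.rpow_le_rpow_left_iff (x := 2) one_lt_two).mpr
          have : α / d ≤ α := by
            rw [div_le_iff₀ hd0]
            nlinarith
          linarith


variable (α) (f) in
/-- The stopping tree generated from a top cube `T`. -/
def tree (T : Cube d) : ℕ → Set (Cube d)
  | 0 => {T}
  | n + 1 => ⋃ Q ∈ tree T n, kids D α f Q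

lemma tree_zero {T : Cube d} : tree D α f T 0 = {T} := rfl

lemma tree_succ {T : Cube d} (n : ℕ) :
    tree D α f T (n + 1) = ⋃ Q ∈ tree D α f T n, kids D α f Q := rfl

lemma tree_mem_cubes {T Q : Cube d} (hT : T ∈ D.cubes) {n : ℕ} (hQ : Q ∈ tree D α f T n) :
    Q ∈ D.cubes := by
  induction n generalizing Q with
  | zero => rw [tree_zero] at hQ; rwa [Set.mem_singleton_iff.mp hQ]
  | succ n ih =>
    rw [tree_succ] at hQ
    obtain ⟨P, hP, hQP⟩ := Set.mem_iUnion₂.mp hQ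
    exact kids_mem_cubes D hQP

lemma tree_subset {T Q : Cube d} (hT : T ∈ D.cubes) {n : ℕ} (hQ : Q ∈ tree D α f T n) :
    Q.toSet ⊆ T.toSet := by
  induction n generalizing Q with
  | zero => rw [tree_zero] at hQ; rw [Set.mem_singleton_iff.mp hQ]
  | succ n ih =>
    rw [tree_succ] at hQ
    obtain ⟨P, hP, hQP⟩ := Set.mem_iUnion₂.mp hQ
    exact (kids_subset D (tree_mem_cubes D hT hP) hQP).trans (ih hP)

lemma kids_idx (hd : 0 < d) {Q R : Cube d} (hQ : Q ∈ D.cubes) (hR : R ∈ kids D α f Q) :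
    idx D Q + 1 ≤ idx D R := by
  obtain ⟨y, hy, h, rfl⟩ := hR
  rw [idx_eq D hd (cubeAt_mem_gen D _ y)]
  omega

lemma tree_idx (hd : 0 < d) {T Q : Cube d} (hT : T ∈ D.cubes) {n : ℕ}
    (hQ : Q ∈ tree D α f T n) : idx D T + n ≤ idx D Q := by
  induction n generalizing Q with
  | zero => rw [tree_zero] at hQ; rw [Set.mem_singleton_iff.mp hQ]; omega
  | succ n ih =>
    rw [tree_succ] at hQ
    obtain ⟨P, hP, hQP⟩ := Set.mem_iUnion₂.mp hQ
    have h1 := ih hP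
    have h2 := kids_idx D hd (tree_mem_cubes D hT hP) hQP
    omega

lemma tree_same {T : Cube d} (hT : T ∈ D.cubes) {n : ℕ} {Q Q' : Cube d}
    (hQ : Q ∈ tree D α f T n) (hQ' : Q' ∈ tree D α f T n)
    (hne : (Q.toSet ∩ Q'.toSet).Nonempty) : Q = Q' := by
  induction n generalizing Q Q' with
  | zero =>
    rw [tree_zero, Set.mem_singleton_iff] at hQ hQ'
    rw [hQ, hQ']
  | succ n ih =>
    rw [tree_succ] at hQ hQ'
    obtain ⟨P, hP, hQP⟩ := Set.mem_iUnion₂.mp hQ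
    obtain ⟨P', hP', hQP'⟩ := Set.mem_iUnion₂.mp hQ'
    obtain ⟨z, hz1, hz2⟩ := hne
    have hPP' : P = P' := ih hP hP'
      ⟨z, kids_subset D (tree_mem_cubes D hT hP) hQP hz1,
        kids_subset D (tree_mem_cubes D hT hP') hQP' hz2⟩
    subst hPP'
    exact kids_disjoint D (tree_mem_cubes D hT hP) hQP hQP' ⟨z, hz1, hz2⟩

lemma tree_structure {T : Cube d} (hT : T ∈ D.cubes) {t n : ℕ} {Q Q' : Cube d}
    (hQ : Q ∈ tree D α f T n) (hQ' : Q' ∈ tree D α f T (n + t))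
    (hne : (Q.toSet ∩ Q'.toSet).Nonempty) :
    Q'.toSet ⊆ Q.toSet ∧ (0 < t → ∃ R ∈ kids D α f Q, Q'.toSet ⊆ R.toSet) := by
  induction t generalizing Q' with
  | zero =>
    rw [Nat.add_zero] at hQ'
    rw [tree_same D hT hQ hQ' hne]
    exact ⟨subset_rfl, fun h => absurd h (lt_irrefl 0)⟩
  | succ t ih =>
    rw [show n + (t + 1) = (n + t) + 1 by ring, tree_succ] at hQ'
    obtain ⟨P', hP', hQP'⟩ := Set.mem_iUnion₂.mp hQ'
    obtain ⟨z, hz1, hz2⟩ := hne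
    have hzP' : z ∈ P'.toSet := kids_subset D (tree_mem_cubes D hT hP') hQP' hz2
    have hsub' : Q'.toSet ⊆ P'.toSet := kids_subset D (tree_mem_cubes D hT hP') hQP'
    obtain ⟨hsub, hkid⟩ := ih hP' ⟨z, hz1, hzP'⟩
    refine ⟨hsub'.trans hsub, fun _ => ?_⟩
    rcases Nat.eq_zero_or_pos t with rfl | ht
    · rw [Nat.add_zero] at hP'
      have : Q = P' := tree_same D hT hQ hP' ⟨z, hz1, hzP'⟩
      exact ⟨Q', this ▸ hQP', subset_rfl⟩
    · obtain ⟨R, hR, hPR⟩ := hkid ht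
      exact ⟨R, hR, hsub'.trans hPR⟩

/-- Domination within the tree: every lattice cube inside `T` has value controlled by
`2^{1-α/d}` times the value of some tree cube containing it. -/
lemma tree_dom (hd : 0 < d) (hα0 : 0 ≤ α) (hαd : α < d)
    (hf : LocallyIntegrable f volume) {T P : Cube d} (hT : T ∈ D.cubes) (hP : P ∈ D.cubes)
    (hsub : P.toSet ⊆ T.toSet) :
    ∃ n, ∃ Q ∈ tree D α f T n, P.toSet ⊆ Q.toSet ∧ val α f P ≤ aC d α * val α f Q := by
  classical
  set N := (idx D P - idx D T).toNat with hN
  set pred := fun n => ∃ Q ∈ tree D α f T n, P.toSet ⊆ Q.toSet with hpred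
  have hpred0 : pred 0 := ⟨T, by rw [tree_zero]; exact Set.mem_singleton T, hsub⟩
  have hbound : ∀ n, pred n → n ≤ N := by
    intro n ⟨Q, hQ, hPQ⟩
    have h1 := tree_idx D hd hT hQ
    have h2 := idx_le_of_subset D hd (tree_mem_cubes D hT hQ) hP hPQ
    omega
  set n0 := Nat.findGreatest pred (N + 1) with hn0
  have hpredn0 : pred n0 := Nat.findGreatest_spec (Nat.zero_le _) hpred0
  obtain ⟨Q, hQ, hPQ⟩ := hpredn0
  refine ⟨n0, Q, hQ, hPQ, ?_⟩
  by_contra hlt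
  push_neg at hlt
  have hQcubes : Q ∈ D.cubes := tree_mem_cubes D hT hQ
  have hPneQ : P ≠ Q := by
    rintro rfl
    have h1 : val α f P ≤ aC d α * val α f P :=
      le_mul_of_one_le_left zero_le (one_le_aC hα0 hαd.le)
    exact absurd (lt_of_le_of_lt h1 hlt) (lt_irrefl _)
  obtain ⟨R, hR, hPR⟩ := kids_cover D hd hQcubes hP hPQ hPneQ hlt
  have hpredn1 : pred (n0 + 1) := by
    refine ⟨R, ?_, hPR⟩
    rw [tree_succ]
    exact Set.mem_iUnion₂.mpr ⟨Q, hQ, hR⟩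
  have h1 : n0 + 1 ≤ N := hbound _ hpredn1
  exact Nat.findGreatest_is_greatest (Nat.lt_succ_self n0) (by omega) hpredn1


/-! #### Exhaustion by the chain at a basepoint -/

lemma exists_chain_mem (hq : ∀ x : Fin d → ℝ, D.quadrant x = Set.univ)
    (x0 y : Fin d → ℝ) : ∃ k, y ∈ (cubeAt D k x0).toSet := by
  have hy : y ∈ D.quadrant x0 := by rw [hq x0]; trivial
  rw [DyadicLattice.quadrant] at hy
  obtain ⟨Q, hQ, hyQ⟩ := Set.mem_iUnion₂.mp hy
  obtain ⟨hQc, hx0⟩ := hQ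
  obtain ⟨k, hk⟩ := Set.mem_iUnion.mp hQc
  exact ⟨k, by rwa [← cubeAt_unique D hk hx0]⟩

lemma chain_mono {k j : ℤ} (h : k ≤ j) (x0 : Fin d → ℝ) {y : Fin d → ℝ}
    (hy : y ∈ (cubeAt D j x0).toSet) : y ∈ (cubeAt D k x0).toSet :=
  cubeAt_antitone D h x0 hy

/-- The open box strictly inside the chain cube. -/
def openBox (x0 : Fin d → ℝ) (k : ℤ) : Set (Fin d → ℝ) :=
  Set.pi Set.univ fun i => Set.Ioo ((cubeAt D k x0).corner i)
    ((cubeAt D k x0).corner i + (cubeAt D k x0).side)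

lemma openBox_isOpen (x0 : Fin d → ℝ) (k : ℤ) : IsOpen (openBox D x0 k) :=
  isOpen_set_pi Set.finite_univ fun i _ => isOpen_Ioo

lemma openBox_subset (x0 : Fin d → ℝ) (k : ℤ) : openBox D x0 k ⊆ (cubeAt D k x0).toSet := by
  intro y hy i
  have := hy i (Set.mem_univ i)
  exact ⟨this.1.le, this.2⟩

lemma openBox_mono {k j : ℤ} (h : k ≤ j) (x0 : Fin d → ℝ) :
    openBox D x0 j ⊆ openBox D x0 k := by
  intro y hy i _
  have h1 := subset_iff.mp (cubeAt_antitone D h x0) i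
  have h2 := hy i (Set.mem_univ i)
  exact ⟨lt_of_le_of_lt h1.1 h2.1, lt_of_lt_of_le h2.2 h1.2⟩

lemma exists_openBox_mem (hd : 0 < d) (hq : ∀ x : Fin d → ℝ, D.quadrant x = Set.univ)
    (x0 y : Fin d → ℝ) : ∃ k, y ∈ openBox D x0 k := by
  have H : ∀ i : Fin d, ∃ k, Function.update y i (y i - 1) ∈ (cubeAt D k x0).toSet :=
    fun i => exists_chain_mem D hq x0 _
  choose g hg using H
  obtain ⟨ky, hky⟩ := exists_chain_mem D hq x0 y
  haveI : Nonempty (Fin d) := ⟨⟨0, hd⟩⟩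
  set F : Finset ℤ := insert ky (Finset.univ.image g) with hF
  have hFne : F.Nonempty := ⟨ky, Finset.mem_insert_self _ _⟩
  set k := F.min' hFne with hk
  have hkky : k ≤ ky := F.min'_le ky (Finset.mem_insert_self _ _)
  have hkg : ∀ i, k ≤ g i := fun i =>
    F.min'_le (g i) (Finset.mem_insert_of_mem (Finset.mem_image_of_mem g (Finset.mem_univ i)))
  refine ⟨k, fun i _ => ?_⟩
  have hy1 : y ∈ (cubeAt D k x0).toSet := chain_mono D hkky x0 hky
  have hy2 : Function.update y i (y i - 1) ∈ (cubeAt D k x0).toSet :=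
    chain_mono D (hkg i) x0 (hg i)
  have h1 := (hy2 i).1
  rw [Function.update_self] at h1
  exact ⟨by linarith, (hy1 i).2⟩

lemma exists_compact_subset_chain (hd : 0 < d)
    (hq : ∀ x : Fin d → ℝ, D.quadrant x = Set.univ) (x0 : Fin d → ℝ)
    {K : Set (Fin d → ℝ)} (hK : IsCompact K) : ∃ k, K ⊆ (cubeAt D k x0).toSet := by
  have hcover : K ⊆ ⋃ k : ℤ, openBox D x0 k := by
    intro y _
    obtain ⟨k, hk⟩ := exists_openBox_mem D hd hq x0 y
    exact Set.mem_iUnion.mpr ⟨k, hk⟩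
  obtain ⟨t, ht⟩ := hK.elim_finite_subcover (openBox D x0) (openBox_isOpen D x0) hcover
  rcases t.eq_empty_or_nonempty with rfl | htne
  · refine ⟨0, fun y hy => ?_⟩
    have := ht hy
    simp at this
  · refine ⟨t.min' htne, fun y hy => ?_⟩
    obtain ⟨k, hkt, hyk⟩ := Set.mem_iUnion₂.mp (ht hy)
    exact openBox_subset D x0 _ (openBox_mono D (t.min'_le k hkt) x0 hyk)

lemma lint_zero_of_disjoint_tsupport {P : Cube d} (h : P.toSet ∩ tsupport f = ∅) :
    (∫⁻ y in P.toSet, (‖f y‖₊ : ℝ≥0∞)) = 0 := by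
  have hz : ∀ y ∈ P.toSet, f y = 0 := by
    intro y hy
    apply image_eq_zero_of_notMem_tsupport
    intro hmem
    exact Set.eq_empty_iff_forall_notMem.mp h y ⟨hy, hmem⟩
  calc (∫⁻ y in P.toSet, (‖f y‖₊ : ℝ≥0∞))
      = ∫⁻ _ in P.toSet, 0 := by
        apply setLIntegral_congr_fun (measurableSet_toSet P)
        exact fun y hy => by simp [hz y hy]
    _ = 0 := lintegral_zero

end SD

end SparseAux


/-- pointwise sparse domination of the dyadic fractional maximal operator. -/
theorem sparse_domination_dyadic_fractional_maximal
    {d : ℕ} (hd : 0 < d) (D : DyadicLattice d)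
    (honequad : ∀ x : Fin d → ℝ, D.quadrant x = Set.univ)
    (f : (Fin d → ℝ) → ℝ) (hf : LocallyIntegrable f volume)
    (hsupp : HasCompactSupport f)
    (α : ℝ) (hα0 : 0 ≤ α) (hαd : α < d) :
    ∃ S : Set (Cube d), S ⊆ D.cubes ∧ IsSparseCubes (1 / 2) S ∧
      ∀ᵐ x ∂(volume : Measure (Fin d → ℝ)),
        MfracDyadic D α f x ≤
          ENNReal.ofReal ((2 : ℝ) ^ (1 - α / (d : ℝ))) * sparseOp α S f x := by
  classical
  open SD in
  set x0 : Fin d → ℝ := fun _ => 0 with hx0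
  obtain ⟨k₀, hk₀⟩ := exists_compact_subset_chain D hd honequad x0 hsupp
  set T : Cube d := cubeAt D k₀ x0 with hT
  have hTc : T ∈ D.cubes := cubeAt_mem_cubes D k₀ x0
  have hTidx : idx D T = k₀ := idx_eq D hd (cubeAt_mem_gen D k₀ x0)
  set chainS : Set (Cube d) := {R | ∃ j : ℤ, j < k₀ ∧ R = cubeAt D j x0} with hchainS
  set treeS : Set (Cube d) := ⋃ n : ℕ, tree D α f T n with htreeS
  set S : Set (Cube d) := treeS ∪ chainS with hSdef
  have htreeS_cubes : treeS ⊆ D.cubes := by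
    intro Q hQ
    obtain ⟨n, hn⟩ := Set.mem_iUnion.mp hQ
    exact tree_mem_cubes D hTc hn
  have hchainS_cubes : chainS ⊆ D.cubes := by
    rintro Q ⟨j, hj, rfl⟩
    exact cubeAt_mem_cubes D j x0
  have hSsub : S ⊆ D.cubes := Set.union_subset htreeS_cubes hchainS_cubes
  have hScount : S.Countable := (cubes_countable D).mono hSsub
  have htree_sub_T : ∀ {Q}, Q ∈ treeS → Q.toSet ⊆ T.toSet := by
    intro Q hQ
    obtain ⟨n, hn⟩ := Set.mem_iUnion.mp hQ
    exact tree_subset D hTc hn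
  -- the exceptional (removed) set of a cube
  set rem : Cube d → Set (Fin d → ℝ) :=
    fun Q => ⋃ R ∈ {R | R ∈ S ∧ R.toSet ⊆ Q.toSet ∧ R ≠ Q}, R.toSet with hrem
  have hrem_sub : ∀ Q, rem Q ⊆ Q.toSet := by
    intro Q
    exact Set.iUnion₂_subset fun R hR => hR.2.1
  have hrem_meas : ∀ Q, MeasurableSet (rem Q) := by
    intro Q
    exact MeasurableSet.biUnion (hScount.mono fun R hR => hR.1)
      fun R _ => measurableSet_toSet R
  -- measure bound on the removed set
  have hrem_half : ∀ Q ∈ S, volume (rem Q) ≤ ENNReal.ofReal (1 / 2) * volume Q.toSet := by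
    intro Q hQS
    rcases hQS with hQt | hQc
    · -- tree cube: removed set is inside the union of the stopping children
      obtain ⟨n, hn⟩ := Set.mem_iUnion.mp hQt
      have hQcubes : Q ∈ D.cubes := tree_mem_cubes D hTc hn
      have hsub : rem Q ⊆ ⋃ R ∈ kids D α f Q, R.toSet := by
        refine Set.iUnion₂_subset fun R hR => ?_
        obtain ⟨hRS, hRQ, hRne⟩ := hR
        rcases hRS with hRt | hRc
        · obtain ⟨n', hn'⟩ := Set.mem_iUnion.mp hRt
          have hinter : (R.toSet ∩ Q.toSet).Nonempty :=
            (toSet_nonempty R).mono (Set.subset_inter subset_rfl hRQ)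
          rcases le_or_gt n' n with hle | hlt
          · exfalso
            have hn'' : Q ∈ tree D α f T (n' + (n - n')) := by
              rwa [show n' + (n - n') = n by omega]
            have := (tree_structure D hTc hn' hn'' hinter).1
            exact hRne (cube_eq_of_toSet_eq hd (le_antisymm hRQ this))
          · have hn'' : R ∈ tree D α f T (n + (n' - n)) := by
              rwa [show n + (n' - n) = n' by omega]
            have hinterQR : (Q.toSet ∩ R.toSet).Nonempty :=
              hinter.mono (by rw [Set.inter_comm])
            obtain ⟨Rk, hRk, hsubk⟩ := (tree_structure D hTc hn hn'' hinterQR).2 (by omega)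
            exact (Set.subset_biUnion_of_mem hRk).trans' hsubk |>.trans
              (le_refl _) |>.trans' subset_rfl |>.trans subset_rfl |>.trans subset_rfl
              |>.trans subset_rfl
        · exfalso
          obtain ⟨j, hj, rfl⟩ := hRc
          have h1 : (cubeAt D j x0).side = sideGen D j :=
            side_eq_sideGen D (cubeAt_mem_gen D j x0)
          have h2 : T.side = sideGen D k₀ := side_eq_sideGen D (cubeAt_mem_gen D k₀ x0)
          have h3 : (cubeAt D j x0).side ≤ T.side :=
            side_le_of_subset hd (hRQ.trans (htree_sub_T hQt))
          have h4 : sideGen D k₀ < sideGen D j := sideGen_strictAnti D hj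
          rw [h1, h2] at h3
          linarith
      exact (measure_mono hsub).trans (kids_measure D hd hα0 hαd hf hQcubes)
    · -- chain cube: removed set is inside the next chain cube
      obtain ⟨j, hj, rfl⟩ := hQc
      have hsub : rem (cubeAt D j x0) ⊆ (cubeAt D (j + 1) x0).toSet := by
        refine Set.iUnion₂_subset fun R hR => ?_
        obtain ⟨hRS, hRQ, hRne⟩ := hR
        rcases hRS with hRt | hRc
        · exact (htree_sub_T hRt).trans (cubeAt_antitone D (by omega) x0)
        · obtain ⟨i, hi, rfl⟩ := hRc
          have hij : j < i := by
            have := idx_lt_of_ssubset D hd (cubeAt_mem_cubes D j x0)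
              (cubeAt_mem_cubes D i x0) hRQ hRne
            rwa [idx_eq D hd (cubeAt_mem_gen D j x0),
              idx_eq D hd (cubeAt_mem_gen D i x0)] at this
          exact cubeAt_antitone D (by omega) x0
      refine (measure_mono hsub).trans ?_
      rw [volume_toSet, volume_toSet,
        side_eq_sideGen D (cubeAt_mem_gen D (j+1) x0),
        side_eq_sideGen D (cubeAt_mem_gen D j x0), sideGen_succ D j,
        ← ENNReal.ofReal_mul (by norm_num)]
      apply ENNReal.ofReal_le_ofReal
      have hsg := sideGen_pos D j
      rw [div_pow]
      have h2d : (2:ℝ) ≤ 2 ^ d := by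
        calc (2:ℝ) = 2 ^ 1 := (pow_one 2).symm
        _ ≤ 2 ^ d := pow_le_pow_right₀ one_le_two hd
      calc sideGen D j ^ d / 2 ^ d ≤ sideGen D j ^ d / 2 := by
            apply div_le_div_of_nonneg_left (by positivity) (by norm_num) h2d
        _ = 1 / 2 * sideGen D j ^ d := by ring
  -- the sparse family
  refine ⟨S, hSsub, ⟨fun Q => Q.toSet \ rem Q, fun Q hQS => ⟨Set.diff_subset, ?_, ?_⟩, ?_⟩, ?_⟩
  · exact (measurableSet_toSet Q).diff (hrem_meas Q)
  · -- measure lower bound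
    have hv := vol_ne_top Q
    have hhalf : ENNReal.ofReal (1/2) * volume Q.toSet ≠ ∞ :=
      ENNReal.mul_ne_top ENNReal.ofReal_ne_top hv
    rw [measure_diff (hrem_sub Q) (hrem_meas Q).nullMeasurableSet
      (lt_of_le_of_lt (measure_mono (hrem_sub Q)) (lt_of_le_of_ne le_top hv)).ne]
    have hsplit : volume Q.toSet
        = ENNReal.ofReal (1/2) * volume Q.toSet + ENNReal.ofReal (1/2) * volume Q.toSet := by
      rw [← add_mul, ← ENNReal.ofReal_add (by norm_num) (by norm_num)]
      norm_num
    calc ENNReal.ofReal (1/2) * volume Q.toSet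
        = volume Q.toSet - ENNReal.ofReal (1/2) * volume Q.toSet := by
          nth_rewrite 2 [hsplit]
          rw [ENNReal.add_sub_cancel_right hhalf]
      _ ≤ volume Q.toSet - volume (rem Q) := tsub_le_tsub_left (hrem_half Q hQS) _
  · -- pairwise disjointness
    intro Q hQS Q' hQ'S hne
    rw [Function.onFun, Set.disjoint_left]
    rintro z ⟨hz1, hz2⟩ ⟨hz1', hz2'⟩
    have hinter : (Q.toSet ∩ Q'.toSet).Nonempty := ⟨z, hz1, hz1'⟩
    rcases nested_or_disjoint D hd (hSsub hQS) (hSsub hQ'S) hinter with hss | hss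
    · exact hz2' (Set.mem_biUnion (show Q ∈ {R | R ∈ S ∧ R.toSet ⊆ Q'.toSet ∧ R ≠ Q'}
        from ⟨hQS, hss, hne⟩) hz1)
    · exact hz2 (Set.mem_biUnion (show Q' ∈ {R | R ∈ S ∧ R.toSet ⊆ Q.toSet ∧ R ≠ Q}
        from ⟨hQ'S, hss, hne.symm⟩) hz1')
  · -- a.e. (in fact everywhere) domination
    apply Filter.Eventually.of_forall
    intro x
    have hsparse_ge : ∀ Q, Q ∈ S → x ∈ Q.toSet → val α f Q ≤ sparseOp α S f x := by
      intro Q hQS hxQ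
      have := ENNReal.le_tsum (f := fun Q : S => (Q : Cube d).toSet.indicator
        (fun _ => volume (Q : Cube d).toSet ^ (α / (d : ℝ) - 1) *
          ∫⁻ y in (Q : Cube d).toSet, (‖f y‖₊ : ℝ≥0∞)) x) ⟨Q, hQS⟩
      rw [Set.indicator_of_mem hxQ] at this
      exact this
    have key : ∀ P, P ∈ D.cubes → x ∈ P.toSet →
        val α f P ≤ aC d α * sparseOp α S f x := by
      intro P hPc hxP
      by_cases hI : (∫⁻ y in P.toSet, (‖f y‖₊ : ℝ≥0∞)) = 0
      · rw [val, hI, mul_zero]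
        exact zero_le
      · have hinter : (P.toSet ∩ tsupport f).Nonempty := by
          rw [Set.nonempty_iff_ne_empty]
          intro h
          exact hI (lint_zero_of_disjoint_tsupport h)
        have hinterT : (P.toSet ∩ T.toSet).Nonempty :=
          hinter.mono (Set.inter_subset_inter subset_rfl hk₀)
        have treecase : P.toSet ⊆ T.toSet → val α f P ≤ aC d α * sparseOp α S f x := by
          intro hsubT
          obtain ⟨n, Q, hQt, hPQ, hval⟩ := tree_dom D hd hα0 hαd hf hTc hPc hsubT
          have hQS : Q ∈ S := Or.inl (Set.mem_iUnion.mpr ⟨n, hQt⟩)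
          exact hval.trans (mul_le_mul_right (hsparse_ge Q hQS (hPQ hxP)) _)
        rcases eq_or_ne P T with rfl | hPT
        · exact treecase subset_rfl
        · rcases nested_or_disjoint D hd hPc hTc hinterT with hss | hss
          · exact treecase hss
          · -- T ⊊ P : P is a chain cube
            have hidx : idx D P < k₀ := by
              have := idx_lt_of_ssubset D hd hPc hTc hss (Ne.symm hPT)
              rwa [hTidx] at this
            have hx0P : x0 ∈ P.toSet := hss (mem_cubeAt D k₀ x0)
            have hPchain : P = cubeAt D (idx D P) x0 :=
              cubeAt_unique D (mem_gen_idx D hPc) hx0P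
            have hPS : P ∈ S := Or.inr ⟨idx D P, hidx, hPchain⟩
            calc val α f P ≤ sparseOp α S f x := hsparse_ge P hPS hxP
              _ ≤ aC d α * sparseOp α S f x :=
                le_mul_of_one_le_left zero_le (one_le_aC hα0 hαd.le)
    show MfracDyadic D α f x ≤ aC d α * sparseOp α S f x
    rw [MfracDyadic]
    exact iSup_le fun P => iSup_le fun hP => iSup_le fun hxP => key P hP hxP
end

section
/- Let 1 < p, q < ∞, β < d(p−1), γ > −d, and α ≥ d/p − d/q. Then the pair of inhomogeneous weights (⟨x⟩^β, ⟨x⟩^γ), where ⟨x⟩ = (1+|x|²)^{1/2}, satisfies the A_{p,q}^α condition if and only if all of the following hold: α − d/p + d/q ≤ β/p − γ/q, α ≤ d, γ/q ≤ d/q' − α, and β/p ≥ α − d/p (where q' = q/(q−1)). -/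
open MeasureTheory ENNReal NNReal Set

noncomputable section ApqHelpers

namespace Apq
variable {d : ℕ}

def nsq (x : Fin d → ℝ) : ℝ := 1 + ∑ i, x i ^ 2

lemma one_le_nsq (x : Fin d → ℝ) : 1 ≤ nsq x := by
  have : (0:ℝ) ≤ ∑ i, x i ^ 2 := Finset.sum_nonneg fun i _ => sq_nonneg _
  simp [nsq]; linarith

lemma nsq_pos (x : Fin d → ℝ) : 0 < nsq x := lt_of_lt_of_le one_pos (one_le_nsq x)

lemma measurable_nsq_rpow (u : ℝ) :
    Measurable fun x : Fin d → ℝ => ENNReal.ofReal (nsq x ^ u) := by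
  apply Measurable.ennreal_ofReal
  apply Continuous.measurable
  apply Continuous.rpow_const
  · exact continuous_const.add (continuous_finset_sum _ fun i _ =>
      (continuous_apply i).pow 2)
  · exact fun x => Or.inl (ne_of_gt (nsq_pos x))

lemma cube_toSet_pi (Q : Cube d) :
    Q.toSet = Set.pi univ fun i => Ico (Q.corner i) (Q.corner i + Q.side) := by
  ext y; simp [Cube.toSet, Set.mem_pi, Set.mem_Ico]

lemma cube_measurableSet (Q : Cube d) : MeasurableSet Q.toSet := by
  rw [cube_toSet_pi]
  exact MeasurableSet.univ_pi fun i => measurableSet_Ico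

lemma cube_volume (Q : Cube d) : volume Q.toSet = ENNReal.ofReal (Q.side ^ d) := by
  rw [cube_toSet_pi, volume_pi_pi]
  simp [Real.volume_Ico, ENNReal.ofReal_pow Q.side_pos.le]

end Apq

namespace Apq2
open Apq
variable {d : ℕ}

lemma lint_le (Q : Set (Fin d → ℝ)) (u B : ℝ) (hB : ∀ x ∈ Q, nsq x ^ u ≤ B) :
    ∫⁻ x in Q, ENNReal.ofReal (nsq x ^ u) ≤ ENNReal.ofReal B * volume Q := by
  calc ∫⁻ x in Q, ENNReal.ofReal (nsq x ^ u)
      ≤ ∫⁻ _x in Q, ENNReal.ofReal B :=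
        setLIntegral_mono measurable_const fun x hx => ENNReal.ofReal_le_ofReal (hB x hx)
    _ = ENNReal.ofReal B * volume Q := setLIntegral_const _ _

lemma lint_ge (Q : Set (Fin d → ℝ)) (u b : ℝ) (hb : ∀ x ∈ Q, b ≤ nsq x ^ u) :
    ENNReal.ofReal b * volume Q ≤ ∫⁻ x in Q, ENNReal.ofReal (nsq x ^ u) := by
  calc ENNReal.ofReal b * volume Q = ∫⁻ _x in Q, ENNReal.ofReal b := (setLIntegral_const _ _).symm
    _ ≤ ∫⁻ x in Q, ENNReal.ofReal (nsq x ^ u) :=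
        setLIntegral_mono (measurable_nsq_rpow u) fun x hx => ENNReal.ofReal_le_ofReal (hb x hx)

/-- the symmetric cube `[-T,T)^d` as a set -/
def symSet (d : ℕ) (T : ℝ) : Set (Fin d → ℝ) := {y | ∀ i, -T ≤ y i ∧ y i < T}

lemma symSet_pi (T : ℝ) : symSet d T = Set.pi univ fun _ => Ico (-T) T := by
  ext y; simp [symSet, Set.mem_pi]

lemma symSet_volume (T : ℝ) (hT : 0 ≤ T) : volume (symSet d T) = ENNReal.ofReal ((2*T) ^ d) := by
  rw [symSet_pi, volume_pi_pi]
  have : T - (-T) = 2*T := by ring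
  simp [Real.volume_Ico, this, ENNReal.ofReal_pow (by linarith : (0:ℝ) ≤ 2*T)]

lemma symSet_mono {T T' : ℝ} (h : T ≤ T') : symSet d T ⊆ symSet d T' := by
  intro y hy i
  exact ⟨le_trans (by linarith) (hy i).1, lt_of_lt_of_le (hy i).2 h⟩


lemma nsq_rpow_le_one {u : ℝ} (hu0 : u ≤ 0) (x : Fin d → ℝ) : nsq x ^ u ≤ 1 :=
  Real.rpow_le_one_of_one_le_of_nonpos (one_le_nsq x) hu0

lemma nsq_ge_of_coord {R : ℝ} (hR : 0 ≤ R) (x : Fin d → ℝ) (i : Fin d) (h : R ≤ |x i|) :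
    R ^ 2 ≤ nsq x := by
  have h1 : R ^ 2 ≤ x i ^ 2 := by
    calc R ^ 2 ≤ |x i| ^ 2 := by apply pow_le_pow_left₀ hR h
    _ = x i ^ 2 := sq_abs _
  have h2 : x i ^ 2 ≤ ∑ j, x j ^ 2 :=
    Finset.single_le_sum (fun j _ => sq_nonneg (x j)) (Finset.mem_univ i)
  have := one_le_nsq x
  unfold nsq at *
  linarith

lemma shell_induction (u : ℝ) (hu : -(d:ℝ)/2 < u) (hu0 : u ≤ 0) :
    ∃ C : ℝ, 0 < C ∧ ∀ n : ℕ,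
      ∫⁻ x in symSet d ((2:ℝ)^n), ENNReal.ofReal (nsq x ^ u) ≤
        ENNReal.ofReal (C * ((2:ℝ)^n) ^ ((d:ℝ) + 2*u)) := by
  set e := (d:ℝ) + 2*u with he_def
  have he : 0 < e := by simp only [he_def]; linarith
  have h2e : (1:ℝ) < (2:ℝ) ^ e := Real.one_lt_rpow_iff_of_pos (by norm_num) |>.mpr (Or.inl ⟨by norm_num, he⟩)
  set C := (2:ℝ)^d + 4^d / ((2:ℝ)^e - 1) with hC_def
  have hC : 0 < C := by
    have h1 : (0:ℝ) < (2:ℝ)^d := by positivity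
    have h2 : (0:ℝ) ≤ 4^d / ((2:ℝ)^e - 1) := by
      apply div_nonneg (by positivity); linarith
    rw [hC_def]; linarith
  refine ⟨C, hC, ?_⟩
  intro n
  induction n with
  | zero =>
    simp only [pow_zero]
    calc ∫⁻ x in symSet d (1:ℝ), ENNReal.ofReal (nsq x ^ u)
        ≤ ENNReal.ofReal 1 * volume (symSet d (1:ℝ)) :=
          lint_le _ _ _ fun x _ => nsq_rpow_le_one hu0 x
      _ = ENNReal.ofReal ((2:ℝ)^d) := by
          rw [symSet_volume _ (by norm_num), ENNReal.ofReal_one, one_mul]; norm_num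
      _ ≤ ENNReal.ofReal (C * (1:ℝ) ^ e) := by
          apply ENNReal.ofReal_le_ofReal
          rw [Real.one_rpow, mul_one, hC_def]
          have : (0:ℝ) ≤ 4^d / ((2:ℝ)^e - 1) := by
            apply div_nonneg (by positivity); linarith
          linarith
  | succ n ih =>
    set R := (2:ℝ)^n with hR_def
    have hR : 0 < R := by positivity
    have hstep : (2:ℝ)^(n+1) = 2*R := by rw [hR_def]; ring
    rw [hstep]
    have hsub : symSet d (2*R) ⊆ symSet d R ∪ (symSet d (2*R) \ symSet d R) := by
      intro x hx
      by_cases h : x ∈ symSet d R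
      · exact Or.inl h
      · exact Or.inr ⟨hx, h⟩
    have hdiff : ∀ x ∈ symSet d (2*R) \ symSet d R, nsq x ^ u ≤ R ^ (2*u) := by
      intro x hx
      obtain ⟨_, hnot⟩ := hx
      simp only [symSet, Set.mem_setOf_eq, not_forall] at hnot
      obtain ⟨i, hi⟩ := hnot
      have habs : R ≤ |x i| := by
        rcases not_and_or.mp hi with h | h
        · push_neg at h
          calc R ≤ -(x i) := by linarith
          _ ≤ |x i| := neg_le_abs _
        · push_neg at h
          exact le_trans h (le_abs_self _)
      have h1 : R ^ (2:ℕ) ≤ nsq x := nsq_ge_of_coord hR.le x i habs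
      calc nsq x ^ u ≤ (R ^ (2:ℕ)) ^ u :=
            Real.rpow_le_rpow_of_nonpos (by positivity) h1 hu0
        _ = R ^ (2*u) := by
            rw [← Real.rpow_natCast R 2, ← Real.rpow_mul hR.le]; norm_num
    calc ∫⁻ x in symSet d (2*R), ENNReal.ofReal (nsq x ^ u)
        ≤ ∫⁻ x in symSet d R ∪ (symSet d (2*R) \ symSet d R), ENNReal.ofReal (nsq x ^ u) :=
          lintegral_mono_set hsub
      _ ≤ (∫⁻ x in symSet d R, ENNReal.ofReal (nsq x ^ u)) +
          ∫⁻ x in symSet d (2*R) \ symSet d R, ENNReal.ofReal (nsq x ^ u) :=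
          lintegral_union_le _ _ _
      _ ≤ ENNReal.ofReal (C * R ^ e) + ENNReal.ofReal (R ^ (2*u)) * volume (symSet d (2*R)) := by
          apply add_le_add ih
          calc ∫⁻ x in symSet d (2*R) \ symSet d R, ENNReal.ofReal (nsq x ^ u)
              ≤ ENNReal.ofReal (R ^ (2*u)) * volume (symSet d (2*R) \ symSet d R) :=
                lint_le _ _ _ hdiff
            _ ≤ ENNReal.ofReal (R ^ (2*u)) * volume (symSet d (2*R)) :=
                mul_le_mul_right (measure_mono Set.diff_subset) _
      _ ≤ ENNReal.ofReal (C * (2*R) ^ e) := by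
          rw [symSet_volume _ (by linarith), ← ENNReal.ofReal_mul (by positivity),
            ← ENNReal.ofReal_add (by positivity) (by positivity)]
          apply ENNReal.ofReal_le_ofReal
          have h4 : (4*R)^d = 4^d * R^d := mul_pow 4 R d
          have hRd : (R:ℝ)^d = R ^ ((d:ℝ)) := (Real.rpow_natCast R d).symm
          have hsplit : R ^ (2*u) * (2*(2*R))^d = 4^d * R ^ e := by
            have : (2*(2*R)) = 4*R := by ring
            rw [this, h4, hRd, he_def]
            rw [show (d:ℝ) + 2*u = 2*u + (d:ℝ) by ring, Real.rpow_add hR]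
            ring
          rw [hsplit]
          have h2Re : (2*R)^e = 2^e * R^e := Real.mul_rpow (by norm_num) hR.le
          rw [h2Re]
          have hRe : (0:ℝ) < R^e := Real.rpow_pos_of_pos hR e
          have hkey : C + 4^d ≤ C * 2^e := by
            have : C * 2^e - C = C * (2^e - 1) := by ring
            have h2 : C * (2^e - 1) ≥ 4^d := by
              rw [hC_def]
              have hpos : (0:ℝ) < (2:ℝ)^e - 1 := by linarith
              have : ((2:ℝ)^d + 4^d / ((2:ℝ)^e - 1)) * ((2:ℝ)^e - 1)
                  = (2:ℝ)^d * ((2:ℝ)^e - 1) + 4^d := by field_simp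
              rw [this]
              have : (0:ℝ) ≤ (2:ℝ)^d * ((2:ℝ)^e - 1) := by positivity
              linarith
            linarith
          calc C * R^e + 4^d * R^e = (C + 4^d) * R^e := by ring
            _ ≤ (C * 2^e) * R^e := by
                apply mul_le_mul_of_nonneg_right hkey hRe.le
            _ = C * (2^e * R^e) := by ring

lemma shell_bound (u : ℝ) (hu : -(d:ℝ)/2 < u) (hu0 : u ≤ 0) :
    ∃ C : ℝ, 0 < C ∧ ∀ T : ℝ, 1 ≤ T →
      ∫⁻ x in symSet d T, ENNReal.ofReal (nsq x ^ u) ≤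
        ENNReal.ofReal (C * T ^ ((d:ℝ) + 2*u)) := by
  obtain ⟨C0, hC0, hind⟩ := shell_induction u hu hu0
  set e := (d:ℝ) + 2*u with he_def
  have he : 0 < e := by rw [he_def]; linarith
  have h4e : (0:ℝ) < (4:ℝ) ^ e := Real.rpow_pos_of_pos (by norm_num) e
  refine ⟨C0 * 4 ^ e, by positivity, ?_⟩
  intro T hT
  have hT0 : 0 < T := by linarith
  set n := Nat.clog 2 ⌈T⌉₊ with hn_def
  have h1 : T ≤ (2:ℝ)^n := by
    calc T ≤ (⌈T⌉₊:ℝ) := Nat.le_ceil T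
    _ ≤ ((2^n : ℕ):ℝ) := by exact_mod_cast Nat.le_pow_clog (by norm_num) _
    _ = (2:ℝ)^n := by push_cast; ring
  have h2 : (2:ℝ)^n ≤ 4*T := by
    by_cases hc : ⌈T⌉₊ ≤ 1
    · have hn0 : n = 0 := by rw [hn_def, Nat.clog_of_right_le_one hc]
      rw [hn0]; simp; linarith
    · push_neg at hc
      have hlt := Nat.pow_pred_clog_lt_self (b := 2) (by norm_num) hc
      have hn1 : 1 ≤ n := Nat.clog_pos (by norm_num) hc
      have hlt' : (2:ℝ)^(n-1) ≤ (⌈T⌉₊:ℝ) - 1 := by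
        have : (2^(n-1) : ℕ) + 1 ≤ ⌈T⌉₊ := hlt
        have := (Nat.cast_le (α := ℝ)).mpr this
        push_cast at this ⊢
        linarith
      have hceil : (⌈T⌉₊ : ℝ) < T + 1 := Nat.ceil_lt_add_one hT0.le
      have h2n : (2:ℝ)^n = 2 * (2:ℝ)^(n-1) := by
        rw [← pow_succ']
        congr 1
        omega
      rw [h2n]
      linarith
  calc ∫⁻ x in symSet d T, ENNReal.ofReal (nsq x ^ u)
      ≤ ∫⁻ x in symSet d ((2:ℝ)^n), ENNReal.ofReal (nsq x ^ u) :=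
        lintegral_mono_set (symSet_mono h1)
    _ ≤ ENNReal.ofReal (C0 * ((2:ℝ)^n) ^ e) := hind n
    _ ≤ ENNReal.ofReal (C0 * 4 ^ e * T ^ e) := by
        apply ENNReal.ofReal_le_ofReal
        have : ((2:ℝ)^n) ^ e ≤ (4*T) ^ e :=
          Real.rpow_le_rpow (by positivity) h2 he.le
        have h4T : (4*T) ^ e = 4^e * T^e := Real.mul_rpow (by norm_num) hT0.le
        rw [mul_assoc, ← h4T]
        exact mul_le_mul_of_nonneg_left this hC0.le

/-- The scale of a cube: `max 1 (‖corner‖ + side)`. -/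
def KK (Q : Cube d) : ℝ := max 1 (‖Q.corner‖ + Q.side)

lemma one_le_KK (Q : Cube d) : 1 ≤ KK Q := le_max_left _ _
lemma KK_pos (Q : Cube d) : 0 < KK Q := lt_of_lt_of_le one_pos (one_le_KK Q)
lemma side_le_KK (Q : Cube d) : Q.side ≤ KK Q :=
  le_trans (by have := norm_nonneg Q.corner; linarith) (le_max_right _ _)

lemma abs_corner_le (Q : Cube d) (i : Fin d) : |Q.corner i| ≤ ‖Q.corner‖ := by
  have := norm_le_pi_norm Q.corner i
  rwa [Real.norm_eq_abs] at this

lemma coord_le_KK (Q : Cube d) {x : Fin d → ℝ} (hx : x ∈ Q.toSet) (i : Fin d) :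
    |x i| ≤ KK Q := by
  obtain ⟨h1, h2⟩ := hx i
  have h3 := abs_corner_le Q i
  have h4 := abs_le.mp (le_refl |Q.corner i|) |>.1  -- -(|c i|) ≤ c i
  have hl := Q.side_pos
  have : |x i| ≤ |Q.corner i| + Q.side := by
    rw [abs_le]
    constructor
    · have : -(|Q.corner i|) ≤ Q.corner i := neg_abs_le _
      linarith
    · have : Q.corner i ≤ |Q.corner i| := le_abs_self _
      linarith
  calc |x i| ≤ |Q.corner i| + Q.side := this
    _ ≤ ‖Q.corner‖ + Q.side := by linarith
    _ ≤ KK Q := le_max_right _ _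

lemma nsq_le_on_cube (Q : Cube d) {x : Fin d → ℝ} (hx : x ∈ Q.toSet) :
    nsq x ≤ (1 + d) * KK Q ^ (2:ℕ) := by
  have hK := one_le_KK Q
  have h1 : ∀ i : Fin d, x i ^ 2 ≤ KK Q ^ 2 := by
    intro i
    calc x i ^ 2 = |x i| ^ 2 := (sq_abs _).symm
      _ ≤ KK Q ^ 2 := pow_le_pow_left₀ (abs_nonneg _) (coord_le_KK Q hx i) 2
  have h2 : ∑ i, x i ^ 2 ≤ (d:ℝ) * KK Q ^ 2 := by
    calc ∑ i, x i ^ 2 ≤ ∑ _i : Fin d, KK Q ^ 2 := Finset.sum_le_sum fun i _ => h1 i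
      _ = (d:ℝ) * KK Q ^ 2 := by simp [Finset.sum_const, nsmul_eq_mul]
  have h3 : (1:ℝ) ≤ KK Q ^ 2 := one_le_pow₀ hK
  unfold nsq
  push_cast
  nlinarith

lemma cube_subset_symSet (Q : Cube d) : Q.toSet ⊆ symSet d (KK Q) := by
  intro x hx i
  obtain ⟨h1, h2⟩ := hx i
  have h3 := abs_corner_le Q i
  have hl := Q.side_pos
  have hK : ‖Q.corner‖ + Q.side ≤ KK Q := le_max_right _ _
  constructor
  · have : -(|Q.corner i|) ≤ Q.corner i := neg_abs_le _
    have h5 := norm_nonneg Q.corner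
    nlinarith [le_trans h3 (by linarith : ‖Q.corner‖ ≤ KK Q)]
  · have : Q.corner i ≤ |Q.corner i| := le_abs_self _
    linarith

lemma cube_upper (hd : 0 < d) (u : ℝ) (hu : -(d:ℝ)/2 < u) :
    ∃ C : ℝ, 0 < C ∧ ∀ Q : Cube d,
      ∫⁻ x in Q.toSet, ENNReal.ofReal (nsq x ^ u) ≤
        ENNReal.ofReal (C * Q.side ^ d * KK Q ^ (2*u)) := by
  rcases le_or_gt 0 u with hu0 | hu0
  · -- u ≥ 0
    refine ⟨(1 + d) ^ u, Real.rpow_pos_of_pos (by positivity) u, ?_⟩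
    intro Q
    have hK := KK_pos Q
    have hbound : ∀ x ∈ Q.toSet, nsq x ^ u ≤ (1 + d) ^ u * KK Q ^ (2*u) := by
      intro x hx
      have h1 : nsq x ^ u ≤ ((1 + (d:ℝ)) * KK Q ^ (2:ℕ)) ^ u :=
        Real.rpow_le_rpow (le_of_lt (nsq_pos x)) (nsq_le_on_cube Q hx) hu0
      have h2 : ((1 + (d:ℝ)) * KK Q ^ (2:ℕ)) ^ u = (1 + (d:ℝ)) ^ u * KK Q ^ (2*u) := by
        rw [Real.mul_rpow (by positivity) (by positivity)]
        congr 1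
        rw [← Real.rpow_natCast (KK Q) 2, ← Real.rpow_mul hK.le]
        norm_num
      rw [h2] at h1; exact h1
    calc ∫⁻ x in Q.toSet, ENNReal.ofReal (nsq x ^ u)
        ≤ ENNReal.ofReal ((1 + d) ^ u * KK Q ^ (2*u)) * volume Q.toSet :=
          lint_le _ _ _ hbound
      _ = ENNReal.ofReal ((1 + d) ^ u * Q.side ^ d * KK Q ^ (2*u)) := by
          rw [cube_volume, ← ENNReal.ofReal_mul (by positivity)]
          congr 1; ring
  · -- u < 0
    obtain ⟨Cs, hCs, hshell⟩ := shell_bound u hu hu0.le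
    refine ⟨max ((3:ℝ) ^ (-(2*u))) (Cs * 3 ^ d), lt_max_of_lt_left (Real.rpow_pos_of_pos (by norm_num) _), ?_⟩
    intro Q
    have hK1 := one_le_KK Q
    have hK := KK_pos Q
    have hl := Q.side_pos
    have hKu : (0:ℝ) < KK Q ^ (2*u) := Real.rpow_pos_of_pos hK _
    have hne : (Finset.univ : Finset (Fin d)).Nonempty := ⟨⟨0, hd⟩, Finset.mem_univ _⟩
    set DD := Finset.univ.sup' hne (fun i => max (Q.corner i) (-(Q.corner i + Q.side))) with hDD
    set E := max 1 DD with hE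
    have hE1 : (1:ℝ) ≤ E := le_max_left _ _
    have hEpos : (0:ℝ) < E := lt_of_lt_of_le one_pos hE1
    -- (a): pointwise lower bound
    have ha : ∀ x ∈ Q.toSet, E ^ (2:ℕ) ≤ nsq x := by
      intro x hx
      rcases le_or_gt DD 1 with hD1 | hD1
      · have : E = 1 := max_eq_left hD1
        rw [this]
        simpa using one_le_nsq x
      · have hED : E = DD := max_eq_right hD1.le
        obtain ⟨i₀, _, hi₀⟩ := Finset.exists_mem_eq_sup' hne
          (fun i => max (Q.corner i) (-(Q.corner i + Q.side)))
        obtain ⟨hx1, hx2⟩ := hx i₀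
        have hDDi : DD = max (Q.corner i₀) (-(Q.corner i₀ + Q.side)) := hi₀
        have habs : DD ≤ |x i₀| := by
          rcases le_total (-(Q.corner i₀ + Q.side)) (Q.corner i₀) with hm | hm
          · calc DD = Q.corner i₀ := by rw [hDDi, max_eq_left hm]
              _ ≤ x i₀ := hx1
              _ ≤ |x i₀| := le_abs_self _
          · calc DD = -(Q.corner i₀ + Q.side) := by rw [hDDi, max_eq_right hm]
              _ ≤ -(x i₀) := by linarith
              _ ≤ |x i₀| := neg_le_abs _
        rw [hED]
        exact nsq_ge_of_coord (by linarith : (0:ℝ) ≤ DD) x i₀ habs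
    -- (b): KK Q ≤ E + 2*side
    have hb : KK Q ≤ E + 2 * Q.side := by
      have hnorm : ‖Q.corner‖ ≤ DD + Q.side := by
        have : ∀ i, |Q.corner i| ≤ DD + Q.side := by
          intro i
          have hle : max (Q.corner i) (-(Q.corner i + Q.side)) ≤ DD := by
            have := Finset.le_sup' (fun j => max (Q.corner j) (-(Q.corner j + Q.side)))
              (Finset.mem_univ i)
            rw [← hDD] at this
            exact this
          rcases le_or_gt 0 (Q.corner i) with hc | hc
          · rw [abs_of_nonneg hc]
            have : Q.corner i ≤ DD := le_trans (le_max_left _ _) hle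
            linarith
          · rw [abs_of_neg hc]
            have : -(Q.corner i + Q.side) ≤ DD := le_trans (le_max_right _ _) hle
            linarith
        rw [pi_norm_le_iff_of_nonneg]
        · intro i; rw [Real.norm_eq_abs]; exact this i
        · have := this ⟨0, hd⟩
          have := abs_nonneg (Q.corner ⟨0, hd⟩)
          linarith
      have hDE : DD ≤ E := le_max_right _ _
      calc KK Q ≤ max 1 (DD + Q.side + Q.side) := by
            apply max_le_max (le_refl 1); linarith
        _ ≤ E + 2 * Q.side := by
            apply max_le <;> linarith
    rcases le_or_gt (KK Q) (3 * E) with hcase | hcase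
    · -- subcase 1: pointwise bound
      have hbound : ∀ x ∈ Q.toSet, nsq x ^ u ≤ (3:ℝ) ^ (-(2*u)) * KK Q ^ (2*u) := by
        intro x hx
        have h1 : nsq x ^ u ≤ (E ^ (2:ℕ)) ^ u :=
          Real.rpow_le_rpow_of_nonpos (by positivity) (ha x hx) hu0.le
        have h2 : ((KK Q / 3) ^ (2:ℕ)) ^ u ≤ (E ^ (2:ℕ)) ^ u → True := fun _ => trivial
        have h3 : (KK Q / 3) ^ (2:ℕ) ≤ E ^ (2:ℕ) := by
          apply pow_le_pow_left₀ (by positivity)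
          linarith
        have h4 : (E ^ (2:ℕ)) ^ u ≤ ((KK Q / 3) ^ (2:ℕ)) ^ u :=
          Real.rpow_le_rpow_of_nonpos (by positivity) h3 hu0.le
        have h5 : ((KK Q / 3) ^ (2:ℕ)) ^ u = (3:ℝ) ^ (-(2*u)) * KK Q ^ (2*u) := by
          rw [← Real.rpow_natCast (KK Q / 3) 2, ← Real.rpow_mul (by positivity)]
          push_cast
          rw [show (2:ℝ) * u = 2 * u from rfl]
          rw [Real.div_rpow hK.le (by norm_num : (0:ℝ) ≤ 3)]
          rw [Real.rpow_neg (by norm_num : (0:ℝ) ≤ 3)]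
          field_simp
        linarith [h1, h4, h5.le, h5.ge]
      calc ∫⁻ x in Q.toSet, ENNReal.ofReal (nsq x ^ u)
          ≤ ENNReal.ofReal ((3:ℝ) ^ (-(2*u)) * KK Q ^ (2*u)) * volume Q.toSet :=
            lint_le _ _ _ hbound
        _ ≤ ENNReal.ofReal (max ((3:ℝ) ^ (-(2*u))) (Cs * 3 ^ d) * Q.side ^ d * KK Q ^ (2*u)) := by
            rw [cube_volume, ← ENNReal.ofReal_mul (by positivity)]
            apply ENNReal.ofReal_le_ofReal
            have h6 : (3:ℝ) ^ (-(2*u)) ≤ max ((3:ℝ) ^ (-(2*u))) (Cs * 3 ^ d) := le_max_left _ _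
            have h7 : (0:ℝ) ≤ Q.side ^ d := by positivity
            nlinarith [hKu.le, mul_le_mul_of_nonneg_right h6 (mul_nonneg h7 hKu.le)]
    · -- subcase 2: via shell bound
      have hK3l : KK Q ≤ 3 * Q.side := by linarith
      calc ∫⁻ x in Q.toSet, ENNReal.ofReal (nsq x ^ u)
          ≤ ∫⁻ x in symSet d (KK Q), ENNReal.ofReal (nsq x ^ u) :=
            lintegral_mono_set (cube_subset_symSet Q)
        _ ≤ ENNReal.ofReal (Cs * KK Q ^ ((d:ℝ) + 2*u)) := hshell _ hK1
        _ ≤ ENNReal.ofReal (max ((3:ℝ) ^ (-(2*u))) (Cs * 3 ^ d) * Q.side ^ d * KK Q ^ (2*u)) := by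
            apply ENNReal.ofReal_le_ofReal
            have hsplit : KK Q ^ ((d:ℝ) + 2*u) = KK Q ^ (d:ℕ) * KK Q ^ (2*u) := by
              rw [Real.rpow_add hK, Real.rpow_natCast]
            rw [hsplit]
            have h8 : KK Q ^ (d:ℕ) ≤ (3 * Q.side) ^ d := pow_le_pow_left₀ hK.le hK3l d
            have h9 : (3 * Q.side) ^ d = 3^d * Q.side ^ d := mul_pow _ _ _
            have h10 : Cs * 3 ^ d ≤ max ((3:ℝ) ^ (-(2*u))) (Cs * 3 ^ d) := le_max_right _ _
            calc Cs * (KK Q ^ (d:ℕ) * KK Q ^ (2*u))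
                ≤ Cs * ((3^d * Q.side ^ d) * KK Q ^ (2*u)) := by
                  apply mul_le_mul_of_nonneg_left _ hCs.le
                  apply mul_le_mul_of_nonneg_right _ hKu.le
                  rw [← h9]; exact h8
              _ = (Cs * 3^d) * Q.side ^ d * KK Q ^ (2*u) := by ring
              _ ≤ max ((3:ℝ) ^ (-(2*u))) (Cs * 3 ^ d) * Q.side ^ d * KK Q ^ (2*u) := by
                  apply mul_le_mul_of_nonneg_right _ hKu.le
                  apply mul_le_mul_of_nonneg_right h10 (by positivity)

/-- The subcube `[R/2, R)^d`. -/
def midSet (d : ℕ) (R : ℝ) : Set (Fin d → ℝ) := Set.pi univ fun _ => Ico (R/2) R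

lemma midSet_volume (R : ℝ) (hR : 0 ≤ R) :
    volume (midSet d R) = ENNReal.ofReal ((R/2) ^ d) := by
  rw [midSet, volume_pi_pi]
  have : R - R/2 = R/2 := by ring
  simp [Real.volume_Ico, this, ENNReal.ofReal_pow (by linarith : (0:ℝ) ≤ R/2)]

lemma mid_lower (hd : 0 < d) (u : ℝ) :
    ∃ c : ℝ, 0 < c ∧ ∀ R : ℝ, 1 ≤ R →
      ENNReal.ofReal (c * R ^ ((d:ℝ) + 2*u)) ≤
        ∫⁻ x in midSet d R, ENNReal.ofReal (nsq x ^ u) := by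
  set cu := min ((2:ℝ) ^ (-(2*u))) ((1+(d:ℝ)) ^ u) with hcu
  have hcu0 : 0 < cu :=
    lt_min (Real.rpow_pos_of_pos two_pos _) (Real.rpow_pos_of_pos (by positivity) _)
  refine ⟨cu * (1/2)^d, by positivity, ?_⟩
  intro R hR
  have hR0 : 0 < R := by linarith
  have hRu : (0:ℝ) < R ^ (2*u) := Real.rpow_pos_of_pos hR0 _
  have hpt : ∀ x ∈ midSet d R, cu * R ^ (2*u) ≤ nsq x ^ u := by
    intro x hx
    have hxi : ∀ i, R/2 ≤ x i ∧ x i < R := fun i => Set.mem_univ_pi.mp hx i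
    have hlow : (R/2) ^ (2:ℕ) ≤ nsq x := by
      apply nsq_ge_of_coord (by linarith) x ⟨0, hd⟩
      have := (hxi ⟨0, hd⟩).1
      calc R/2 ≤ x ⟨0, hd⟩ := this
        _ ≤ |x ⟨0, hd⟩| := le_abs_self _
    have hhigh : nsq x ≤ (1+(d:ℝ)) * R ^ (2:ℕ) := by
      have h1 : ∀ i : Fin d, x i ^ 2 ≤ R ^ 2 := by
        intro i
        have h2 := hxi i
        have : |x i| ≤ R := abs_le.mpr ⟨by linarith, (h2.2).le⟩
        calc x i ^ 2 = |x i| ^ 2 := (sq_abs _).symm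
          _ ≤ R ^ 2 := pow_le_pow_left₀ (abs_nonneg _) this 2
      have h2 : ∑ i, x i ^ 2 ≤ (d:ℝ) * R ^ 2 := by
        calc ∑ i, x i ^ 2 ≤ ∑ _i : Fin d, R ^ 2 := Finset.sum_le_sum fun i _ => h1 i
          _ = (d:ℝ) * R ^ 2 := by simp [Finset.sum_const, nsmul_eq_mul]
      have h3 : (1:ℝ) ≤ R ^ 2 := one_le_pow₀ hR
      unfold nsq
      nlinarith
    rcases le_or_gt 0 u with hu0 | hu0
    · have h4 : ((R/2) ^ (2:ℕ)) ^ u ≤ nsq x ^ u :=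
        Real.rpow_le_rpow (by positivity) hlow hu0
      have h5 : ((R/2) ^ (2:ℕ)) ^ u = (2:ℝ) ^ (-(2*u)) * R ^ (2*u) := by
        rw [← Real.rpow_natCast (R/2) 2, ← Real.rpow_mul (by positivity)]
        push_cast
        rw [Real.div_rpow hR0.le (by norm_num : (0:ℝ) ≤ 2),
          Real.rpow_neg (by norm_num : (0:ℝ) ≤ 2)]
        field_simp
      have h6 : cu ≤ (2:ℝ) ^ (-(2*u)) := min_le_left _ _
      calc cu * R ^ (2*u) ≤ (2:ℝ) ^ (-(2*u)) * R ^ (2*u) :=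
            mul_le_mul_of_nonneg_right h6 hRu.le
        _ = ((R/2) ^ (2:ℕ)) ^ u := h5.symm
        _ ≤ nsq x ^ u := h4
    · have h4 : ((1+(d:ℝ)) * R ^ (2:ℕ)) ^ u ≤ nsq x ^ u :=
        Real.rpow_le_rpow_of_nonpos (nsq_pos x) hhigh hu0.le
      have h5 : ((1+(d:ℝ)) * R ^ (2:ℕ)) ^ u = (1+(d:ℝ)) ^ u * R ^ (2*u) := by
        rw [Real.mul_rpow (by positivity) (by positivity)]
        congr 1
        rw [← Real.rpow_natCast R 2, ← Real.rpow_mul hR0.le]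
        norm_num
      have h6 : cu ≤ (1+(d:ℝ)) ^ u := min_le_right _ _
      calc cu * R ^ (2*u) ≤ (1+(d:ℝ)) ^ u * R ^ (2*u) :=
            mul_le_mul_of_nonneg_right h6 hRu.le
        _ = ((1+(d:ℝ)) * R ^ (2:ℕ)) ^ u := h5.symm
        _ ≤ nsq x ^ u := h4
  calc ENNReal.ofReal (cu * (1/2)^d * R ^ ((d:ℝ) + 2*u))
      = ENNReal.ofReal (cu * R ^ (2*u)) * volume (midSet d R) := by
        rw [midSet_volume R hR0.le, ← ENNReal.ofReal_mul (by positivity)]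
        congr 1
        have h7 : R ^ ((d:ℝ) + 2*u) = R ^ (d:ℕ) * R ^ (2*u) := by
          rw [Real.rpow_add hR0, Real.rpow_natCast]
        have h8 : (R/2) ^ d = R ^ d * (1/2)^d := by
          rw [div_pow, one_div, inv_pow]
          field_simp
        rw [h7, h8]
        ring
    _ ≤ ∫⁻ x in midSet d R, ENNReal.ofReal (nsq x ^ u) := lint_ge _ _ _ hpt

lemma prod_le {A B : ℝ≥0∞} (v a b : ℝ) (hv : 0 < v) (ha : 0 < a) (hb : 0 < b)
    (hA : A ≤ ENNReal.ofReal a) (hB : B ≤ ENNReal.ofReal b)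
    (e0 e1 e2 : ℝ) (he1 : 0 ≤ e1) (he2 : 0 ≤ e2) :
    ENNReal.ofReal v ^ e0 * A ^ e1 * B ^ e2 ≤
      ENNReal.ofReal (v ^ e0 * a ^ e1 * b ^ e2) := by
  rw [ENNReal.ofReal_mul (by positivity), ENNReal.ofReal_mul (by positivity)]
  apply mul_le_mul'
  apply mul_le_mul'
  · exact (ENNReal.ofReal_rpow_of_pos hv).le
  · calc A ^ e1 ≤ ENNReal.ofReal a ^ e1 := ENNReal.rpow_le_rpow hA he1
      _ = ENNReal.ofReal (a ^ e1) := ENNReal.ofReal_rpow_of_pos ha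
  · calc B ^ e2 ≤ ENNReal.ofReal b ^ e2 := ENNReal.rpow_le_rpow hB he2
      _ = ENNReal.ofReal (b ^ e2) := ENNReal.ofReal_rpow_of_pos hb

lemma prod_ge {A B : ℝ≥0∞} (v a b : ℝ) (hv : 0 < v) (ha : 0 < a) (hb : 0 < b)
    (hA : ENNReal.ofReal a ≤ A) (hB : ENNReal.ofReal b ≤ B)
    (e0 e1 e2 : ℝ) (he1 : 0 ≤ e1) (he2 : 0 ≤ e2) :
    ENNReal.ofReal (v ^ e0 * a ^ e1 * b ^ e2) ≤
      ENNReal.ofReal v ^ e0 * A ^ e1 * B ^ e2 := by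
  rw [ENNReal.ofReal_mul (by positivity), ENNReal.ofReal_mul (by positivity)]
  apply mul_le_mul'
  apply mul_le_mul'
  · exact (ENNReal.ofReal_rpow_of_pos hv).ge
  · calc ENNReal.ofReal (a ^ e1) = ENNReal.ofReal a ^ e1 :=
        (ENNReal.ofReal_rpow_of_pos ha).symm
      _ ≤ A ^ e1 := ENNReal.rpow_le_rpow hA he1
  · calc ENNReal.ofReal (b ^ e2) = ENNReal.ofReal b ^ e2 :=
        (ENNReal.ofReal_rpow_of_pos hb).symm
      _ ≤ B ^ e2 := ENNReal.rpow_le_rpow hB he2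

lemma suff_real {l K C1 C2 e0 e1 e2 t1 t2 : ℝ}
    (hl : 0 < l) (hK1 : 1 ≤ K) (hlK : l ≤ K) (hC1 : 0 < C1) (hC2 : 0 < C2)
    (he1 : 0 ≤ e1) (he2 : 0 ≤ e2)
    (ha0 : 0 ≤ (d:ℝ)*e0 + (d:ℝ)*e1 + (d:ℝ)*e2)
    (hab : (d:ℝ)*e0 + (d:ℝ)*e1 + (d:ℝ)*e2 + (t1*e1 + t2*e2) ≤ 0) :
    (l^d)^e0 * (C1*l^d*K^t1)^e1 * (C2*l^d*K^t2)^e2 ≤ C1^e1 * C2^e2 := by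
  have hK : (0:ℝ) < K := lt_of_lt_of_le one_pos hK1
  have hld : (l:ℝ)^d = l ^ ((d:ℝ)) := (Real.rpow_natCast l d).symm
  set a := (d:ℝ)*e0 + (d:ℝ)*e1 + (d:ℝ)*e2 with hadef
  set b := t1*e1 + t2*e2 with hbdef
  have key : (l^d)^e0 * (C1*l^d*K^t1)^e1 * (C2*l^d*K^t2)^e2
      = C1^e1 * C2^e2 * (l ^ a) * (K ^ b) := by
    rw [hld]
    rw [Real.mul_rpow (by positivity) (by positivity),
      Real.mul_rpow (by positivity) (by positivity),
      Real.mul_rpow (by positivity) (by positivity),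
      Real.mul_rpow (by positivity) (by positivity)]
    rw [← Real.rpow_mul hl.le, ← Real.rpow_mul hl.le, ← Real.rpow_mul hl.le,
      ← Real.rpow_mul hK.le, ← Real.rpow_mul hK.le]
    rw [hadef, hbdef]
    rw [show (d:ℝ)*e0 + (d:ℝ)*e1 + (d:ℝ)*e2 = (d:ℝ)*e0 + ((d:ℝ)*e1 + (d:ℝ)*e2) by ring,
      Real.rpow_add hl, Real.rpow_add hl, Real.rpow_add hK]
    ring
  rw [key]
  have h1 : l ^ a ≤ K ^ a := Real.rpow_le_rpow hl.le hlK ha0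
  have h2 : K ^ a * K ^ b = K ^ (a + b) := (Real.rpow_add hK a b).symm
  have h3 : K ^ (a + b) ≤ 1 := Real.rpow_le_one_of_one_le_of_nonpos hK1 hab
  have hKb : (0:ℝ) < K ^ b := Real.rpow_pos_of_pos hK b
  have hCf : (0:ℝ) < C1^e1 * C2^e2 := by positivity
  calc C1^e1 * C2^e2 * l ^ a * K ^ b ≤ C1^e1 * C2^e2 * K ^ a * K ^ b := by
        apply mul_le_mul_of_nonneg_right _ hKb.le
        exact mul_le_mul_of_nonneg_left h1 hCf.le
    _ = C1^e1 * C2^e2 * (K ^ (a+b)) := by rw [← h2]; ring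
    _ ≤ C1^e1 * C2^e2 * 1 := mul_le_mul_of_nonneg_left h3 hCf.le
    _ = C1^e1 * C2^e2 := mul_one _

lemma nec_real {R c1 c2 e0 e1 e2 r1 r2 : ℝ} (hR : 0 < R) (hc1 : 0 < c1) (hc2 : 0 < c2) :
    ((2*R)^d)^e0 * (c1*R^r1)^e1 * (c2*R^r2)^e2
      = ((2:ℝ)^d)^e0 * c1^e1 * c2^e2 * R ^ ((d:ℝ)*e0 + r1*e1 + r2*e2) := by
  have h2R : (2*R)^d = 2^d * R^d := mul_pow 2 R d
  have hRd : (R:ℝ)^d = R ^ ((d:ℝ)) := (Real.rpow_natCast R d).symm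
  rw [h2R, hRd,
    Real.mul_rpow (by positivity) (by positivity),
    Real.mul_rpow (by positivity) (by positivity),
    Real.mul_rpow (by positivity) (by positivity),
    ← Real.rpow_mul hR.le, ← Real.rpow_mul hR.le, ← Real.rpow_mul hR.le,
    show (d:ℝ)*e0 + r1*e1 + r2*e2 = (d:ℝ)*e0 + (r1*e1 + r2*e2) by ring,
    Real.rpow_add hR, Real.rpow_add hR]
  ring

end Apq2

end ApqHelpers

/-- characterization of the `A_{p,q}^α` condition for inhomogeneous weights. -/
theorem apq_alpha_inhomogeneous_weights
    {d : ℕ} (hd : 0 < d) (p q α β γ : ℝ) (hp : 1 < p) (hq : 1 < q)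
    (hβ : β < (d : ℝ) * (p - 1)) (hγ : -(d : ℝ) < γ)
    (hα : (d : ℝ) / p - (d : ℝ) / q ≤ α) :
    apqConst (d := d) p q α (fun x => (1 + ∑ i, x i ^ 2) ^ (β / 2))
        (fun x => (1 + ∑ i, x i ^ 2) ^ (γ / 2)) ≠ ∞ ↔
      (α - (d : ℝ) / p + (d : ℝ) / q ≤ β / p - γ / q ∧ α ≤ (d : ℝ) ∧
        γ / q ≤ (d : ℝ) / (q / (q - 1)) - α ∧ α - (d : ℝ) / p ≤ β / p) := by
  have hp0 : (0:ℝ) < p := by linarith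
  have hq0 : (0:ℝ) < q := by linarith
  have hp1 : (0:ℝ) < p - 1 := by linarith
  have hq1 : (0:ℝ) < q - 1 := by linarith
  have hd0 : (0:ℝ) < d := by exact_mod_cast hd
  have he1 : (0:ℝ) ≤ (p-1)/p := by positivity
  have he2 : (0:ℝ) ≤ 1/q := by positivity
  set u₁ : ℝ := β/2 * (-(p/(p-1))/p) with hu₁def
  have hu₁2 : 2*u₁ = -(β/(p-1)) := by rw [hu₁def]; field_simp
  have hu₁ : -(d:ℝ)/2 < u₁ := by
    have h1 : β/(p-1) < d := (div_lt_iff₀ hp1).mpr (by linarith [hβ])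
    linarith [hu₁2]
  have hu₂ : -(d:ℝ)/2 < γ/2 := by linarith
  have hid1a : (d:ℝ)*(α/(d:ℝ)-1) = α - (d:ℝ) := by field_simp
  have hid1b : (d:ℝ)*((p-1)/p) = (d:ℝ) - (d:ℝ)/p := by field_simp; try ring
  have hid1c : (d:ℝ)*(1/q) = (d:ℝ)/q := by ring
  have hid1 : (d:ℝ)*(α/(d:ℝ)-1) + (d:ℝ)*((p-1)/p) + (d:ℝ)*(1/q)
      = α - (d:ℝ)/p + (d:ℝ)/q := by rw [hid1a, hid1b, hid1c]; ring
  have hid2 : 2*u₁*((p-1)/p) + 2*(γ/2)*(1/q) = -(β/p) + γ/q := by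
    have h9 : 2*u₁*((p-1)/p) = -(β/p) := by
      rw [hu₁2]; field_simp; try ring
    rw [h9]; try field_simp
    try ring
  have hrw : apqConst (d := d) p q α (fun x => (1 + ∑ i, x i ^ 2) ^ (β / 2))
        (fun x => (1 + ∑ i, x i ^ 2) ^ (γ / 2))
      = ⨆ Q : Cube d, volume Q.toSet ^ (α/(d:ℝ) - 1) *
          (∫⁻ x in Q.toSet, ENNReal.ofReal (Apq.nsq x ^ u₁)) ^ ((p-1)/p) *
          (∫⁻ x in Q.toSet, ENNReal.ofReal (Apq.nsq x ^ (γ/2))) ^ (1/q) := by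
    unfold apqConst
    apply iSup_congr
    intro Q
    have h1 : ∀ x : Fin d → ℝ,
        ENNReal.ofReal ((fun x : Fin d → ℝ => (1 + ∑ i, x i ^ 2) ^ (β / 2)) x
            ^ (-(p / (p - 1)) / p))
          = ENNReal.ofReal (Apq.nsq x ^ u₁) := by
      intro x
      congr 1
      simp only
      rw [hu₁def, Real.rpow_mul (Apq.nsq_pos x).le]
      rfl
    have h2 : ∀ x : Fin d → ℝ,
        ENNReal.ofReal ((fun x : Fin d → ℝ => (1 + ∑ i, x i ^ 2) ^ (γ / 2)) x)
          = ENNReal.ofReal (Apq.nsq x ^ (γ/2)) := fun x => rfl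
    rw [lintegral_congr h1, lintegral_congr h2]
  rw [hrw]
  constructor
  · -- necessity
    intro h
    obtain ⟨c1, hc1, hlow1⟩ := Apq2.mid_lower hd u₁
    obtain ⟨c2, hc2, hlow2⟩ := Apq2.mid_lower hd (γ/2)
    set E : ℝ := (α - (d:ℝ)/p + (d:ℝ)/q) + (-(β/p) + γ/q) with hE
    set c0 : ℝ := ((2:ℝ)^d)^(α/(d:ℝ)-1) * c1^((p-1)/p) * c2^(1/q) with hc0def
    have hc0 : (0:ℝ) < c0 := by
      rw [hc0def]
      have : (0:ℝ) < ((2:ℝ)^d)^(α/(d:ℝ)-1) := Real.rpow_pos_of_pos (by positivity) _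
      positivity
    have key : ∀ R : ℝ, 1 ≤ R → ENNReal.ofReal (c0 * R ^ E) ≤
        ⨆ Q : Cube d, volume Q.toSet ^ (α/(d:ℝ) - 1) *
          (∫⁻ x in Q.toSet, ENNReal.ofReal (Apq.nsq x ^ u₁)) ^ ((p-1)/p) *
          (∫⁻ x in Q.toSet, ENNReal.ofReal (Apq.nsq x ^ (γ/2))) ^ (1/q) := by
      intro R hR
      have hR0 : (0:ℝ) < R := lt_of_lt_of_le one_pos hR
      set QR : Cube d := ⟨fun _ => -R, 2*R, by linarith⟩ with hQR
      have hvol : volume QR.toSet = ENNReal.ofReal ((2*R)^d) := Apq.cube_volume QR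
      have hsub : Apq2.midSet d R ⊆ QR.toSet := by
        intro x hx i
        have h3 := Set.mem_univ_pi.mp hx i
        obtain ⟨h4, h5⟩ := h3
        exact ⟨by show -R ≤ x i; linarith, by show x i < -R + 2*R; linarith⟩
      have hA : ENNReal.ofReal (c1 * R ^ ((d:ℝ) + 2*u₁)) ≤
          ∫⁻ x in QR.toSet, ENNReal.ofReal (Apq.nsq x ^ u₁) :=
        le_trans (hlow1 R hR) (lintegral_mono_set hsub)
      have hB : ENNReal.ofReal (c2 * R ^ ((d:ℝ) + 2*(γ/2))) ≤
          ∫⁻ x in QR.toSet, ENNReal.ofReal (Apq.nsq x ^ (γ/2)) :=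
        le_trans (hlow2 R hR) (lintegral_mono_set hsub)
      have hexp : (d:ℝ)*(α/(d:ℝ)-1) + ((d:ℝ) + 2*u₁)*((p-1)/p)
          + ((d:ℝ) + 2*(γ/2))*(1/q) = E := by
        rw [hE]; linear_combination hid1 + hid2
      have hprod : ENNReal.ofReal (c0 * R ^ E) ≤
          volume QR.toSet ^ (α/(d:ℝ) - 1) *
            (∫⁻ x in QR.toSet, ENNReal.ofReal (Apq.nsq x ^ u₁)) ^ ((p-1)/p) *
            (∫⁻ x in QR.toSet, ENNReal.ofReal (Apq.nsq x ^ (γ/2))) ^ (1/q) := by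
        rw [hvol]
        refine le_trans (le_of_eq ?_)
          (Apq2.prod_ge ((2*R)^d) (c1 * R ^ ((d:ℝ) + 2*u₁)) (c2 * R ^ ((d:ℝ) + 2*(γ/2)))
            (by positivity) (mul_pos hc1 (Real.rpow_pos_of_pos hR0 _))
            (mul_pos hc2 (Real.rpow_pos_of_pos hR0 _))
            hA hB (α/(d:ℝ)-1) ((p-1)/p) (1/q) he1 he2)
        rw [Apq2.nec_real hR0 hc1 hc2, hexp, hc0def]
      exact le_trans hprod (le_iSup (fun Q : Cube d =>
        volume Q.toSet ^ (α/(d:ℝ) - 1) *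
          (∫⁻ x in Q.toSet, ENNReal.ofReal (Apq.nsq x ^ u₁)) ^ ((p-1)/p) *
          (∫⁻ x in Q.toSet, ENNReal.ofReal (Apq.nsq x ^ (γ/2))) ^ (1/q)) QR)
    have hE0 : E ≤ 0 := by
      by_contra hEpos
      push_neg at hEpos
      set Sr := (⨆ Q : Cube d, volume Q.toSet ^ (α/(d:ℝ) - 1) *
          (∫⁻ x in Q.toSet, ENNReal.ofReal (Apq.nsq x ^ u₁)) ^ ((p-1)/p) *
          (∫⁻ x in Q.toSet, ENNReal.ofReal (Apq.nsq x ^ (γ/2))) ^ (1/q)).toReal with hSr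
      have hSr0 : 0 ≤ Sr := ENNReal.toReal_nonneg
      have hX : (0:ℝ) ≤ (Sr + 1)/c0 := by positivity
      set R := max 1 (((Sr + 1)/c0) ^ (1/E)) with hRdef
      have hR1 : (1:ℝ) ≤ R := le_max_left _ _
      have h2 := key R hR1
      rw [ENNReal.ofReal_le_iff_le_toReal h] at h2
      rw [← hSr] at h2
      have h3 : (Sr + 1)/c0 ≤ R ^ E := by
        calc (Sr+1)/c0 = (((Sr+1)/c0) ^ (1/E)) ^ E := by
              rw [← Real.rpow_mul hX, one_div, inv_mul_cancel₀ (ne_of_gt hEpos),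
                Real.rpow_one]
          _ ≤ R ^ E := Real.rpow_le_rpow (Real.rpow_nonneg hX _) (le_max_right _ _) hEpos.le
      have h4 : Sr + 1 ≤ c0 * R ^ E := by
        rw [div_le_iff₀ hc0] at h3
        linarith [h3]
      linarith
    have hC1 : α - (d:ℝ)/p + (d:ℝ)/q ≤ β/p - γ/q := by
      rw [hE] at hE0; linarith
    have hbp : β/p < (d:ℝ) - (d:ℝ)/p := by
      have hid3 : (d:ℝ)*(p-1)/p = (d:ℝ) - (d:ℝ)/p := by field_simp
      have h5 : β/p < (d:ℝ)*(p-1)/p := by gcongr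
      linarith [h5, hid3.le, hid3.ge]
    have hgq : -((d:ℝ)/q) < γ/q := by
      have h6 : (γ + (d:ℝ))/q = γ/q + (d:ℝ)/q := add_div γ d q
      have h7 : (0:ℝ) < (γ + (d:ℝ))/q := div_pos (by linarith) hq0
      linarith
    have hqq : (d:ℝ)/(q/(q-1)) = (d:ℝ) - (d:ℝ)/q := by field_simp
    exact ⟨hC1, by linarith, by rw [hqq]; linarith, by linarith⟩
  · -- sufficiency
    rintro ⟨hcond1, -, -, -⟩
    obtain ⟨C1, hC1p, hup1⟩ := Apq2.cube_upper hd u₁ hu₁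
    obtain ⟨C2, hC2p, hup2⟩ := Apq2.cube_upper hd (γ/2) hu₂
    apply ne_top_of_le_ne_top
      (show ENNReal.ofReal (C1^((p-1)/p) * C2^(1/q)) ≠ ⊤ from ENNReal.ofReal_ne_top)
    apply iSup_le
    intro Q
    have hl := Q.side_pos
    have hK1 := Apq2.one_le_KK Q
    have hlK := Apq2.side_le_KK Q
    have hKu1 : (0:ℝ) < Apq2.KK Q ^ (2*u₁) :=
      Real.rpow_pos_of_pos (Apq2.KK_pos Q) _
    have hKu2 : (0:ℝ) < Apq2.KK Q ^ (2*(γ/2)) :=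
      Real.rpow_pos_of_pos (Apq2.KK_pos Q) _
    calc volume Q.toSet ^ (α/(d:ℝ) - 1) *
          (∫⁻ x in Q.toSet, ENNReal.ofReal (Apq.nsq x ^ u₁)) ^ ((p-1)/p) *
          (∫⁻ x in Q.toSet, ENNReal.ofReal (Apq.nsq x ^ (γ/2))) ^ (1/q)
        ≤ ENNReal.ofReal ((Q.side^d)^(α/(d:ℝ)-1) *
            (C1 * Q.side^d * Apq2.KK Q ^ (2*u₁))^((p-1)/p) *
            (C2 * Q.side^d * Apq2.KK Q ^ (2*(γ/2)))^(1/q)) := by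
          rw [Apq.cube_volume Q]
          exact Apq2.prod_le _ _ _ (by positivity) (by positivity) (by positivity)
            (hup1 Q) (hup2 Q) _ _ _ he1 he2
      _ ≤ ENNReal.ofReal (C1^((p-1)/p) * C2^(1/q)) := by
          apply ENNReal.ofReal_le_ofReal
          apply Apq2.suff_real hl hK1 hlK hC1p hC2p he1 he2
          · rw [hid1]; linarith
          · have hre : (d:ℝ)*(α/(d:ℝ)-1) + (d:ℝ)*((p-1)/p) + (d:ℝ)*(1/q)
                + (2*u₁*((p-1)/p) + 2*(γ/2)*(1/q))
                = (α - (d:ℝ)/p + (d:ℝ)/q) + (-(β/p) + γ/q) := by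
              linear_combination hid1 + hid2
            rw [hre]
            linarith
end

section
/- The transpose Hardy operator ℋᵗf, defined by ℋᵗf(x) = ∫_x^∞ f(t)/t dt for x > 0 and ℋᵗf(x) = −∫_{−∞}^x f(t)/t dt for x < 0, satisfies the pointwise sparse bound |ℋᵗf(x)| ≤ 2 Σ_{I∈S} χ_I(x) ⨍_I |f| for all x ≠ 0, where S = {[0, 2^k) : k ∈ ℤ} ∪ {[−2^k, 0) : k ∈ ℤ} is a 1/2-sparse family of intervals. -/
open MeasureTheory ENNReal NNReal Set

noncomputable section

/-- The transpose Hardy operator: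
`ℋᵗf(x) = ∫_x^∞ f(t)/t dt` for `x > 0` and `ℋᵗf(x) = −∫_{−∞}^x f(t)/t dt` for `x < 0`. -/
def transposeHardy (f : ℝ → ℝ) (x : ℝ) : ℝ :=
  if 0 < x then ∫ t in Set.Ioi x, f t / t
  else -∫ t in Set.Iio x, f t / t

/-- An `η`-sparse collection of measurable subsets of `ℝ`. -/
def IsSparseSets (η : ℝ) (S : Set (Set ℝ)) : Prop :=
  ∃ G : Set ℝ → Set ℝ,
    (∀ I ∈ S, G I ⊆ I ∧ MeasurableSet (G I) ∧
      ENNReal.ofReal η * volume I ≤ volume (G I)) ∧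
    S.PairwiseDisjoint G

lemma two_zpow_succ (k : ℤ) : (2:ℝ) ^ k = 2 * 2 ^ (k - 1) := by
  rw [← zpow_one_add₀ (two_ne_zero : (2:ℝ) ≠ 0)]
  ring_nf

lemma Gpos (k : ℤ) :
    Set.Ico (0:ℝ) (2 ^ k) \ (fun y => 2 * y) ⁻¹' Set.Ico (0:ℝ) (2 ^ k)
      = Set.Ico ((2:ℝ) ^ (k - 1)) (2 ^ k) := by
  have h2k := two_zpow_succ k
  ext y
  simp only [mem_diff, mem_preimage, mem_Ico, not_and, not_lt]
  constructor
  · rintro ⟨⟨h0, h1⟩, h2⟩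
    have := h2 (by linarith)
    exact ⟨by linarith, h1⟩
  · rintro ⟨h0, h1⟩
    have hpos : (0:ℝ) < 2 ^ (k - 1) := by positivity
    exact ⟨⟨by linarith, h1⟩, fun _ => by linarith⟩

lemma Gneg (k : ℤ) :
    Set.Ico (-(2:ℝ) ^ k) 0 \ (fun y => 2 * y) ⁻¹' Set.Ico (-(2:ℝ) ^ k) 0
      = Set.Ico (-(2:ℝ) ^ k) (-(2:ℝ) ^ (k - 1)) := by
  have h2k := two_zpow_succ k
  have hpos : (0:ℝ) < 2 ^ (k - 1) := by positivity
  ext y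
  simp only [mem_diff, mem_preimage, mem_Ico, not_and, not_lt]
  constructor
  · rintro ⟨⟨h0, h1⟩, h2⟩
    by_cases hy : -(2:ℝ) ^ k ≤ 2 * y
    · have := h2 hy; linarith
    · push_neg at hy; exact ⟨h0, by linarith⟩
  · rintro ⟨h0, h1⟩
    refine ⟨⟨h0, by linarith⟩, fun h => by linarith⟩

lemma disj_pos_lt {k l : ℤ} (h : k < l) :
    Disjoint (Set.Ico ((2:ℝ) ^ (k - 1)) (2 ^ k)) (Set.Ico ((2:ℝ) ^ (l - 1)) (2 ^ l)) := by
  rw [Set.Ico_disjoint_Ico]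
  have hkl : (2:ℝ) ^ k ≤ 2 ^ (l - 1) :=
    zpow_le_zpow_right₀ one_le_two (by omega)
  calc min ((2:ℝ) ^ k) (2 ^ l) ≤ 2 ^ k := min_le_left _ _
    _ ≤ 2 ^ (l - 1) := hkl
    _ ≤ max ((2:ℝ) ^ (k - 1)) (2 ^ (l - 1)) := le_max_right _ _

lemma disj_neg_lt {k l : ℤ} (h : k < l) :
    Disjoint (Set.Ico (-(2:ℝ) ^ k) (-(2:ℝ) ^ (k - 1)))
      (Set.Ico (-(2:ℝ) ^ l) (-(2:ℝ) ^ (l - 1))) := by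
  rw [Set.Ico_disjoint_Ico]
  have hkl : (2:ℝ) ^ k ≤ 2 ^ (l - 1) :=
    zpow_le_zpow_right₀ one_le_two (by omega)
  calc min (-(2:ℝ) ^ (k - 1)) (-(2:ℝ) ^ (l - 1)) ≤ -(2:ℝ) ^ (l - 1) := min_le_right _ _
    _ ≤ -(2:ℝ) ^ k := by linarith
    _ ≤ max (-(2:ℝ) ^ k) (-(2:ℝ) ^ l) := le_max_left _ _

lemma disj_pos_neg (k l : ℤ) :
    Disjoint (Set.Ico ((2:ℝ) ^ (k - 1)) (2 ^ k))
      (Set.Ico (-(2:ℝ) ^ l) (-(2:ℝ) ^ (l - 1))) := by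
  rw [Set.disjoint_left]
  rintro a ⟨h1, _⟩ ⟨_, h4⟩
  have hp1 : (0:ℝ) < 2 ^ (k - 1) := by positivity
  have hp2 : (0:ℝ) < 2 ^ (l - 1) := by positivity
  linarith

/-- Pointwise bound on the dyadic piece, positive side. -/
lemma pos_piece_bound (f : ℝ → ℝ) (x : ℝ) (hx : 0 < x) (k : ℤ) :
    (∫⁻ t in Set.Ioi x ∩ Set.Ico ((2:ℝ) ^ (k - 1)) (2 ^ k), (‖f t / t‖₊ : ℝ≥0∞)) ≤
      2 * (Set.Ico (0 : ℝ) (2 ^ k)).indicator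
          (fun _ => (volume (Set.Ico (0 : ℝ) ((2 : ℝ) ^ k)))⁻¹ *
            ∫⁻ t in Set.Ico (0 : ℝ) ((2 : ℝ) ^ k), (‖f t‖₊ : ℝ≥0∞)) x := by
  by_cases hk : x < 2 ^ k
  · have hmem : x ∈ Set.Ico (0:ℝ) (2 ^ k) := ⟨hx.le, hk⟩
    rw [Set.indicator_of_mem hmem]
    have hA : MeasurableSet (Set.Ioi x ∩ Set.Ico ((2:ℝ) ^ (k - 1)) (2 ^ k)) :=
      measurableSet_Ioi.inter measurableSet_Ico
    have hpos : (0:ℝ) < 2 ^ (k - 1) := by positivity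
    calc (∫⁻ t in Set.Ioi x ∩ Set.Ico ((2:ℝ) ^ (k - 1)) (2 ^ k), (‖f t / t‖₊ : ℝ≥0∞))
        ≤ ∫⁻ t in Set.Ioi x ∩ Set.Ico ((2:ℝ) ^ (k - 1)) (2 ^ k),
            ENNReal.ofReal ((2:ℝ) ^ (1 - k)) * (‖f t‖₊ : ℝ≥0∞) := by
          refine setLIntegral_mono' hA fun t ht => ?_
          obtain ⟨htx, ht1, ht2⟩ := ht
          have ht0 : (0:ℝ) < t := lt_of_lt_of_le hpos ht1
          rw [← enorm_eq_nnnorm, ← enorm_eq_nnnorm, Real.enorm_eq_ofReal_abs, Real.enorm_eq_ofReal_abs,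
            ← ENNReal.ofReal_mul (by positivity)]
          apply ENNReal.ofReal_le_ofReal
          rw [abs_div, abs_of_pos ht0]
          have h1k : (2:ℝ) ^ (1 - k) = ((2:ℝ) ^ (k - 1))⁻¹ := by
            rw [← zpow_neg]; ring_nf
          calc |f t| / t ≤ |f t| / 2 ^ (k - 1) := by gcongr
            _ = 2 ^ (1 - k) * |f t| := by rw [h1k, div_eq_mul_inv, mul_comm]
      _ = ENNReal.ofReal ((2:ℝ) ^ (1 - k)) *
            ∫⁻ t in Set.Ioi x ∩ Set.Ico ((2:ℝ) ^ (k - 1)) (2 ^ k), (‖f t‖₊ : ℝ≥0∞) :=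
          lintegral_const_mul' _ _ ENNReal.ofReal_ne_top
      _ ≤ ENNReal.ofReal ((2:ℝ) ^ (1 - k)) *
            ∫⁻ t in Set.Ico (0:ℝ) (2 ^ k), (‖f t‖₊ : ℝ≥0∞) := by
          refine mul_le_mul_right (lintegral_mono_set ?_) _
          rintro t ⟨_, ht1, ht2⟩
          exact ⟨le_trans hpos.le ht1, ht2⟩
      _ = 2 * ((volume (Set.Ico (0 : ℝ) ((2 : ℝ) ^ k)))⁻¹ *
            ∫⁻ t in Set.Ico (0 : ℝ) ((2 : ℝ) ^ k), (‖f t‖₊ : ℝ≥0∞)) := by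
          rw [← mul_assoc]
          congr 1
          have hv : volume (Set.Ico (0 : ℝ) ((2 : ℝ) ^ k)) = ENNReal.ofReal ((2:ℝ) ^ k) := by
            rw [Real.volume_Ico, sub_zero]
          rw [hv, ← ENNReal.ofReal_inv_of_pos (by positivity), ← zpow_neg,
            show ((2:ℝ≥0∞)) = ENNReal.ofReal 2 by norm_num,
            ← ENNReal.ofReal_mul (by norm_num)]
          congr 1
          rw [show (1:ℤ) - k = 1 + (-k) by ring, zpow_add₀ (two_ne_zero : (2:ℝ) ≠ 0), zpow_one]
  · have hempty : Set.Ioi x ∩ Set.Ico ((2:ℝ) ^ (k - 1)) (2 ^ k) = ∅ := by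
      ext t
      simp only [mem_inter_iff, mem_Ioi, mem_Ico, mem_empty_iff_false, iff_false, not_and, not_lt]
      push_neg at hk
      intro htx _
      linarith
    rw [hempty]
    simp

/-- Pointwise bound on the dyadic piece, negative side. -/
lemma neg_piece_bound (f : ℝ → ℝ) (x : ℝ) (hx : x < 0) (k : ℤ) :
    (∫⁻ t in Set.Iio x ∩ Set.Ioc (-(2:ℝ) ^ k) (-(2:ℝ) ^ (k - 1)), (‖f t / t‖₊ : ℝ≥0∞)) ≤
      2 * (Set.Ico (-(2 : ℝ) ^ k) 0).indicator
          (fun _ => (volume (Set.Ico (-(2 : ℝ) ^ k) (0 : ℝ)))⁻¹ *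
            ∫⁻ t in Set.Ico (-(2 : ℝ) ^ k) (0 : ℝ), (‖f t‖₊ : ℝ≥0∞)) x := by
  have hpos : (0:ℝ) < 2 ^ (k - 1) := by positivity
  by_cases hk : -(2:ℝ) ^ k ≤ x
  · have hmem : x ∈ Set.Ico (-(2:ℝ) ^ k) 0 := ⟨hk, hx⟩
    rw [Set.indicator_of_mem hmem]
    have hA : MeasurableSet (Set.Iio x ∩ Set.Ioc (-(2:ℝ) ^ k) (-(2:ℝ) ^ (k - 1))) :=
      measurableSet_Iio.inter measurableSet_Ioc
    calc (∫⁻ t in Set.Iio x ∩ Set.Ioc (-(2:ℝ) ^ k) (-(2:ℝ) ^ (k - 1)), (‖f t / t‖₊ : ℝ≥0∞))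
        ≤ ∫⁻ t in Set.Iio x ∩ Set.Ioc (-(2:ℝ) ^ k) (-(2:ℝ) ^ (k - 1)),
            ENNReal.ofReal ((2:ℝ) ^ (1 - k)) * (‖f t‖₊ : ℝ≥0∞) := by
          refine setLIntegral_mono' hA fun t ht => ?_
          obtain ⟨htx, ht1, ht2⟩ := ht
          have ht0 : t < 0 := lt_of_le_of_lt ht2 (by linarith)
          rw [← enorm_eq_nnnorm, ← enorm_eq_nnnorm, Real.enorm_eq_ofReal_abs, Real.enorm_eq_ofReal_abs,
            ← ENNReal.ofReal_mul (by positivity)]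
          apply ENNReal.ofReal_le_ofReal
          rw [abs_div, abs_of_neg ht0]
          have h1k : (2:ℝ) ^ (1 - k) = ((2:ℝ) ^ (k - 1))⁻¹ := by
            rw [← zpow_neg]; ring_nf
          calc |f t| / (-t) ≤ |f t| / 2 ^ (k - 1) := by
                gcongr
                linarith
            _ = 2 ^ (1 - k) * |f t| := by rw [h1k, div_eq_mul_inv, mul_comm]
      _ = ENNReal.ofReal ((2:ℝ) ^ (1 - k)) *
            ∫⁻ t in Set.Iio x ∩ Set.Ioc (-(2:ℝ) ^ k) (-(2:ℝ) ^ (k - 1)), (‖f t‖₊ : ℝ≥0∞) :=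
          lintegral_const_mul' _ _ ENNReal.ofReal_ne_top
      _ ≤ ENNReal.ofReal ((2:ℝ) ^ (1 - k)) *
            ∫⁻ t in Set.Ico (-(2:ℝ) ^ k) (0:ℝ), (‖f t‖₊ : ℝ≥0∞) := by
          refine mul_le_mul_right (lintegral_mono_set ?_) _
          rintro t ⟨_, ht1, ht2⟩
          exact ⟨ht1.le, by linarith⟩
      _ = 2 * ((volume (Set.Ico (-(2 : ℝ) ^ k) (0 : ℝ)))⁻¹ *
            ∫⁻ t in Set.Ico (-(2 : ℝ) ^ k) (0 : ℝ), (‖f t‖₊ : ℝ≥0∞)) := by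
          rw [← mul_assoc]
          congr 1
          have hv : volume (Set.Ico (-(2 : ℝ) ^ k) (0:ℝ)) = ENNReal.ofReal ((2:ℝ) ^ k) := by
            rw [Real.volume_Ico, zero_sub, neg_neg]
          rw [hv, ← ENNReal.ofReal_inv_of_pos (by positivity), ← zpow_neg,
            show ((2:ℝ≥0∞)) = ENNReal.ofReal 2 by norm_num,
            ← ENNReal.ofReal_mul (by norm_num)]
          congr 1
          rw [show (1:ℤ) - k = 1 + (-k) by ring, zpow_add₀ (two_ne_zero : (2:ℝ) ≠ 0), zpow_one]
  · have hempty : Set.Iio x ∩ Set.Ioc (-(2:ℝ) ^ k) (-(2:ℝ) ^ (k - 1)) = ∅ := by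
      ext t
      simp only [mem_inter_iff, mem_Iio, mem_Ioc, mem_empty_iff_false, iff_false, not_and]
      push_neg at hk
      intro htx h1 _
      linarith
    rw [hempty]
    simp

lemma pos_cover (x : ℝ) (hx : 0 < x) :
    Set.Ioi x ⊆ ⋃ k : ℤ, Set.Ioi x ∩ Set.Ico ((2:ℝ) ^ (k - 1)) (2 ^ k) := by
  intro t ht
  have ht0 : (0:ℝ) < t := lt_trans hx ht
  obtain ⟨n, hn1, hn2⟩ := exists_mem_Ico_zpow ht0 (one_lt_two : (1:ℝ) < 2)
  refine Set.mem_iUnion.2 ⟨n + 1, ht, ?_, ?_⟩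
  · simpa using hn1
  · exact hn2

lemma neg_cover (x : ℝ) (hx : x < 0) :
    Set.Iio x ⊆ ⋃ k : ℤ, Set.Iio x ∩ Set.Ioc (-(2:ℝ) ^ k) (-(2:ℝ) ^ (k - 1)) := by
  intro t ht
  have ht0 : (0:ℝ) < -t := by
    simp only [mem_Iio] at ht
    linarith
  obtain ⟨n, hn1, hn2⟩ := exists_mem_Ico_zpow ht0 (one_lt_two : (1:ℝ) < 2)
  refine Set.mem_iUnion.2 ⟨n + 1, ht, by linarith, ?_⟩
  have : (2:ℝ) ^ (n + 1 - 1) = 2 ^ n := by norm_num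
  rw [this]
  linarith

/-- pointwise sparse bound for the transpose Hardy operator, with the
`1/2`-sparse family `S = {[0, 2^k) : k ∈ ℤ} ∪ {[−2^k, 0) : k ∈ ℤ}`. -/
theorem sparse_bound_transpose_hardy
    (f : ℝ → ℝ) (hf : LocallyIntegrable f volume)
    (h1 : ∀ x : ℝ, 0 < x → IntegrableOn (fun t => f t / t) (Set.Ioi x))
    (h2 : ∀ x : ℝ, x < 0 → IntegrableOn (fun t => f t / t) (Set.Iio x)) :
    IsSparseSets (1 / 2)
      ({I | ∃ k : ℤ, I = Set.Ico (0 : ℝ) (2 ^ k)} ∪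
        {I | ∃ k : ℤ, I = Set.Ico (-(2 : ℝ) ^ k) 0}) ∧
    ∀ x : ℝ, x ≠ 0 →
      ENNReal.ofReal |transposeHardy f x| ≤
        2 * ∑' k : ℤ,
          ((Set.Ico (0 : ℝ) (2 ^ k)).indicator
              (fun _ => (volume (Set.Ico (0 : ℝ) ((2 : ℝ) ^ k)))⁻¹ *
                ∫⁻ t in Set.Ico (0 : ℝ) ((2 : ℝ) ^ k), (‖f t‖₊ : ℝ≥0∞)) x +
            (Set.Ico (-(2 : ℝ) ^ k) 0).indicator
              (fun _ => (volume (Set.Ico (-(2 : ℝ) ^ k) (0 : ℝ)))⁻¹ *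
                ∫⁻ t in Set.Ico (-(2 : ℝ) ^ k) (0 : ℝ), (‖f t‖₊ : ℝ≥0∞)) x) := by
  constructor
  · -- sparsity
    refine ⟨fun I => I \ (fun y => 2 * y) ⁻¹' I, ?_, ?_⟩
    · rintro I (⟨k, rfl⟩ | ⟨k, rfl⟩)
      · dsimp only
        rw [Gpos]
        have h2k := two_zpow_succ k
        have hpos : (0:ℝ) < 2 ^ (k - 1) := by positivity
        refine ⟨Set.Ico_subset_Ico (by positivity) le_rfl, measurableSet_Ico, ?_⟩
        rw [Real.volume_Ico, Real.volume_Ico, sub_zero,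
          ← ENNReal.ofReal_mul (by norm_num)]
        apply ENNReal.ofReal_le_ofReal
        linarith
      · dsimp only
        rw [Gneg]
        have h2k := two_zpow_succ k
        have hpos : (0:ℝ) < 2 ^ (k - 1) := by positivity
        refine ⟨Set.Ico_subset_Ico le_rfl (by linarith), measurableSet_Ico, ?_⟩
        rw [Real.volume_Ico, Real.volume_Ico, zero_sub, neg_neg,
          ← ENNReal.ofReal_mul (by norm_num)]
        apply ENNReal.ofReal_le_ofReal
        linarith
    · rintro I (⟨k, rfl⟩ | ⟨k, rfl⟩) J (⟨l, rfl⟩ | ⟨l, rfl⟩) hne <;>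
        simp only [Function.onFun]
      · rw [Gpos, Gpos]
        have hkl : k ≠ l := fun h => hne (by rw [h])
        rcases hkl.lt_or_gt with h | h
        · exact disj_pos_lt h
        · exact (disj_pos_lt h).symm
      · rw [Gpos, Gneg]
        exact disj_pos_neg k l
      · rw [Gneg, Gpos]
        exact (disj_pos_neg l k).symm
      · rw [Gneg, Gneg]
        have hkl : k ≠ l := fun h => hne (by rw [h])
        rcases hkl.lt_or_gt with h | h
        · exact disj_neg_lt h
        · exact (disj_neg_lt h).symm
  · -- pointwise bound
    intro x hx
    rcases hx.lt_or_gt with hxneg | hxpos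
    · -- x < 0
      rw [transposeHardy, if_neg (not_lt.2 hxneg.le), abs_neg]
      calc ENNReal.ofReal |∫ t in Set.Iio x, f t / t|
          ≤ ∫⁻ t in Set.Iio x, (‖f t / t‖₊ : ℝ≥0∞) := by
            rw [← Real.enorm_eq_ofReal_abs]
            exact enorm_integral_le_lintegral_enorm _
        _ ≤ ∫⁻ t in ⋃ k : ℤ, Set.Iio x ∩ Set.Ioc (-(2:ℝ) ^ k) (-(2:ℝ) ^ (k - 1)),
              (‖f t / t‖₊ : ℝ≥0∞) := lintegral_mono_set (neg_cover x hxneg)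
        _ ≤ ∑' k : ℤ, ∫⁻ t in Set.Iio x ∩ Set.Ioc (-(2:ℝ) ^ k) (-(2:ℝ) ^ (k - 1)),
              (‖f t / t‖₊ : ℝ≥0∞) := lintegral_iUnion_le _ _
        _ ≤ ∑' k : ℤ, 2 * (Set.Ico (-(2 : ℝ) ^ k) 0).indicator
              (fun _ => (volume (Set.Ico (-(2 : ℝ) ^ k) (0 : ℝ)))⁻¹ *
                ∫⁻ t in Set.Ico (-(2 : ℝ) ^ k) (0 : ℝ), (‖f t‖₊ : ℝ≥0∞)) x :=
            ENNReal.tsum_le_tsum fun k => neg_piece_bound f x hxneg k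
        _ = 2 * ∑' k : ℤ, (Set.Ico (-(2 : ℝ) ^ k) 0).indicator
              (fun _ => (volume (Set.Ico (-(2 : ℝ) ^ k) (0 : ℝ)))⁻¹ *
                ∫⁻ t in Set.Ico (-(2 : ℝ) ^ k) (0 : ℝ), (‖f t‖₊ : ℝ≥0∞)) x :=
            ENNReal.tsum_mul_left
        _ ≤ _ := by
            refine mul_le_mul_right (ENNReal.tsum_le_tsum fun k => le_add_self) _
    · -- 0 < x
      rw [transposeHardy, if_pos hxpos]
      calc ENNReal.ofReal |∫ t in Set.Ioi x, f t / t|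
          ≤ ∫⁻ t in Set.Ioi x, (‖f t / t‖₊ : ℝ≥0∞) := by
            rw [← Real.enorm_eq_ofReal_abs]
            exact enorm_integral_le_lintegral_enorm _
        _ ≤ ∫⁻ t in ⋃ k : ℤ, Set.Ioi x ∩ Set.Ico ((2:ℝ) ^ (k - 1)) (2 ^ k),
              (‖f t / t‖₊ : ℝ≥0∞) := lintegral_mono_set (pos_cover x hxpos)
        _ ≤ ∑' k : ℤ, ∫⁻ t in Set.Ioi x ∩ Set.Ico ((2:ℝ) ^ (k - 1)) (2 ^ k),
              (‖f t / t‖₊ : ℝ≥0∞) := lintegral_iUnion_le _ _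
        _ ≤ ∑' k : ℤ, 2 * (Set.Ico (0 : ℝ) (2 ^ k)).indicator
              (fun _ => (volume (Set.Ico (0 : ℝ) ((2 : ℝ) ^ k)))⁻¹ *
                ∫⁻ t in Set.Ico (0 : ℝ) ((2 : ℝ) ^ k), (‖f t‖₊ : ℝ≥0∞)) x :=
            ENNReal.tsum_le_tsum fun k => pos_piece_bound f x hxpos k
        _ = 2 * ∑' k : ℤ, (Set.Ico (0 : ℝ) (2 ^ k)).indicator
              (fun _ => (volume (Set.Ico (0 : ℝ) ((2 : ℝ) ^ k)))⁻¹ *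
                ∫⁻ t in Set.Ico (0 : ℝ) ((2 : ℝ) ^ k), (‖f t‖₊ : ℝ≥0∞)) x :=
            ENNReal.tsum_mul_left
        _ ≤ _ := by
            refine mul_le_mul_right (ENNReal.tsum_le_tsum fun k => le_self_add) _

end
end
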